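/- arXiv:1805.01291 — 7 statements merged into one kernel-verified Lean document; each statement's English description precedes it below -/
import Mathlib

section
/- Let $p \ge 2$ and let $a, b \in \{0,\dots,9\}$ with $a < b$. For every integer $m \ge 10^{p-1}$, the number of integers $j$ with $10^{p-1} \le j \le m$ whose $p$-th digit is $a$ is at least the number of integers $j$ with $10^{p-1} \le j \le m$ whose $p$-th digit is $b$. -/
open Finset Real Filter

noncomputable section

/-- The `p`-th digit (from the left) of `j` in base 10. -/
def pthDigit (p j : ℕ) : ℕ := j / 10 ^ (Nat.log 10 j + 1 - p) % 10

/-- Number of integers `j` with `10^(p-1) ≤ j ≤ n` whose `p`-th digit is `d`. -/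
def digitCount (p d n : ℕ) : ℕ :=
  ((Finset.Icc (10 ^ (p - 1)) n).filter (fun j => pthDigit p j = d)).card

/-- The two-stage uniform model probability `P_{(d,n,p)}`. -/
def Pdig (p d n : ℕ) : ℝ :=
  (1 / ((n : ℝ) + 1 - 10 ^ (p - 1))) *
    ∑ i ∈ Finset.Icc (10 ^ (p - 1)) n, (digitCount p d i : ℝ) / ((i : ℝ) + 1 - 10 ^ (p - 1))

lemma aux (p a b j : ℕ) (hp : 2 ≤ p) (hb : b ≤ 9) (hab : a < b)
    (hj : 10 ^ (p - 1) ≤ j) (hd : pthDigit p j = b) :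
    Nat.log 10 (j - (b - a) * 10 ^ (Nat.log 10 j + 1 - p)) = Nat.log 10 j ∧
    pthDigit p (j - (b - a) * 10 ^ (Nat.log 10 j + 1 - p)) = a ∧
    (b - a) * 10 ^ (Nat.log 10 j + 1 - p) ≤ j ∧
    10 ^ (p - 1) ≤ j - (b - a) * 10 ^ (Nat.log 10 j + 1 - p) := by
  have hj0 : j ≠ 0 := by
    rintro rfl
    exact Nat.lt_irrefl 0 (lt_of_lt_of_le (pow_pos (by norm_num) _) hj)
  set L := Nat.log 10 j with hLdef
  have hpL : p - 1 ≤ L := (Nat.le_log_iff_pow_le (by norm_num) hj0).mpr hj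
  set e := L + 1 - p with hedef
  have he1L : e + 1 ≤ L := by omega
  have hjL : 10 ^ L ≤ j := Nat.pow_log_le_self 10 hj0
  have hjU : j < 10 ^ (L + 1) := Nat.lt_pow_succ_log_self (by norm_num) j
  have hdb : j / 10 ^ e % 10 = b := hd
  set q := j / 10 ^ (e + 1) with hqdef
  have hq10 : j / 10 ^ e / 10 = q := by
    rw [hqdef, Nat.div_div_eq_div_mul, pow_succ]
  have hqe : j / 10 ^ e = 10 * q + b := by
    conv_lhs => rw [← Nat.div_add_mod (j / 10 ^ e) 10]
    rw [hq10, hdb]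
  -- claim 1: (b-a)*10^e ≤ j
  have hba : b - a ≤ j / 10 ^ e := by rw [hqe]; omega
  have hle : (b - a) * 10 ^ e ≤ j :=
    le_trans (Nat.mul_le_mul_right _ hba) (Nat.div_mul_le_self _ _)
  set j' := j - (b - a) * 10 ^ e with hj'def
  -- j' / 10^e = 10*q + a
  have hdiv : j' / 10 ^ e = 10 * q + a := by
    rw [hj'def, mul_comm (b - a), Nat.sub_mul_div _ _ _, hqe]
    omega
  have hdiv2 : j' / 10 ^ (e + 1) = q := by
    rw [pow_succ, ← Nat.div_div_eq_div_mul, hdiv]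
    omega
  -- j' ≥ 10^L
  have hqge : 10 ^ (L - (e + 1)) ≤ q := by
    have := Nat.div_le_div_right (c := 10 ^ (e + 1)) hjL
    rwa [Nat.pow_div he1L (by norm_num)] at this
  have hj'ge : 10 ^ L ≤ j' := by
    calc 10 ^ L = 10 ^ (L - (e + 1)) * 10 ^ (e + 1) := by
          rw [← pow_add]; congr 1; omega
      _ ≤ q * 10 ^ (e + 1) := Nat.mul_le_mul_right _ hqge
      _ ≤ j' := by rw [← hdiv2]; exact Nat.div_mul_le_self _ _
  have hj'le : j' ≤ j := Nat.sub_le _ _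
  have hlog : Nat.log 10 j' = L :=
    Nat.log_eq_of_pow_le_of_lt_pow hj'ge (lt_of_le_of_lt hj'le hjU)
  refine ⟨hlog, ?_, hle, le_trans (Nat.pow_le_pow_right (by norm_num) hpL) hj'ge⟩
  show j' / 10 ^ (Nat.log 10 j' + 1 - p) % 10 = a
  rw [hlog]
  show j' / 10 ^ e % 10 = a
  rw [hdiv, Nat.mul_add_mod, Nat.mod_eq_of_lt (by omega)]

theorem stmt3 (p a b m : ℕ) (hp : 2 ≤ p) (ha : a ≤ 9) (hb : b ≤ 9) (hab : a < b)
    (hm : 10 ^ (p - 1) ≤ m) :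
    ((Finset.Icc (10 ^ (p - 1)) m).filter (fun j => pthDigit p j = b)).card ≤
    ((Finset.Icc (10 ^ (p - 1)) m).filter (fun j => pthDigit p j = a)).card := by
  apply Finset.card_le_card_of_injOn
    (fun j => j - (b - a) * 10 ^ (Nat.log 10 j + 1 - p))
  · intro j hjm
    simp only [Finset.mem_coe, Finset.mem_filter, Finset.mem_Icc] at hjm ⊢
    obtain ⟨⟨hj1, hj2⟩, hd⟩ := hjm
    obtain ⟨hlog, hdig, hle, hge⟩ := aux p a b j hp hb hab hj1 hd
    exact ⟨⟨hge, le_trans (Nat.sub_le _ _) hj2⟩, hdig⟩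
  · intro j1 h1 j2 h2 heq
    simp only [Finset.mem_coe, Finset.mem_filter, Finset.mem_Icc] at h1 h2
    obtain ⟨hlog1, _, hle1, _⟩ := aux p a b j1 hp hb hab h1.1.1 h1.2
    obtain ⟨hlog2, _, hle2, _⟩ := aux p a b j2 hp hb hab h2.1.1 h2.2
    simp only at heq
    have hL : Nat.log 10 j1 = Nat.log 10 j2 := by
      rw [← hlog1, ← hlog2, heq]
    have := congrArg (· + (b - a) * 10 ^ (Nat.log 10 j1 + 1 - p)) heq
    rwa [Nat.sub_add_cancel hle1, hL, Nat.sub_add_cancel hle2] at this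
end
end

section
/- Let $p \ge 2$, $d \in \{0,\dots,9\}$, and define $P_{(d,n,p)}$ as the probability that the second-stage draw has $p$-th digit $d$ in the two-stage uniform model bounded by $n$. Then for all $n \ge 10^{p-1}+9$ and all $a, b \in \{0,\dots,9\}$ with $a < b$, one has $P_{(a,n,p)} > P_{(b,n,p)}$. -/
open Finset Real Filter

noncomputable section

lemma key (p a b j : ℕ) (hp : 2 ≤ p) (hb : b ≤ 9) (hab : a < b)
    (hmj : 10 ^ (p - 1) ≤ j) (hdig : pthDigit p j = b) :
    pthDigit p (j - (b - a) * 10 ^ (Nat.log 10 j + 1 - p)) = a ∧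
    10 ^ (p - 1) ≤ j - (b - a) * 10 ^ (Nat.log 10 j + 1 - p) ∧
    Nat.log 10 (j - (b - a) * 10 ^ (Nat.log 10 j + 1 - p)) = Nat.log 10 j ∧
    (j - (b - a) * 10 ^ (Nat.log 10 j + 1 - p)) + (b - a) * 10 ^ (Nat.log 10 j + 1 - p) = j := by
  obtain ⟨p', rfl⟩ : ∃ p', p = p' + 2 := ⟨p - 2, by omega⟩
  have hps : p' + 2 - 1 = p' + 1 := by omega
  rw [hps] at hmj
  have h10 : (1:ℕ) < 10 := by norm_num
  have hj0 : j ≠ 0 := by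
    have : 0 < 10 ^ (p' + 1) := Nat.pow_pos (by norm_num)
    omega
  have hL : p' + 1 ≤ Nat.log 10 j := (Nat.le_log_iff_pow_le h10 hj0).mpr hmj
  obtain ⟨k, hk⟩ : ∃ k, Nat.log 10 j = k + (p' + 1) := ⟨Nat.log 10 j - (p' + 1), by omega⟩
  have hexp : Nat.log 10 j + 1 - (p' + 2) = k := by omega
  rw [hexp]
  have hjl : 10 ^ (k + (p' + 1)) ≤ j := hk ▸ Nat.pow_log_le_self 10 hj0
  have hju : j < 10 ^ (k + (p' + 1) + 1) := by
    have := Nat.lt_pow_succ_log_self h10 j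
    rwa [hk] at this
  set E := 10 ^ k with hE
  have hE0 : 0 < E := Nat.pow_pos (by norm_num)
  set q := j / (10 * E) with hq
  set d0 := j / E % 10 with hd0
  set r := j % E with hr
  have hdiv : j / E = 10 * q + d0 := by
    have h1 : j / E / 10 = q := by
      rw [Nat.div_div_eq_div_mul, hq, mul_comm]
    omega
  have hdec : j = 10 * q * E + d0 * E + r := by
    have h1 := Nat.div_add_mod j E
    rw [hdiv] at h1
    conv_lhs => rw [← h1]
    rw [hr]; ring
  have hrE : r < E := Nat.mod_lt _ hE0
  have hd0b : d0 = b := by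
    rw [pthDigit, hexp] at hdig
    exact hdig
  obtain ⟨c, hc, hc1⟩ : ∃ c, b = a + c ∧ 1 ≤ c := ⟨b - a, by omega, by omega⟩
  have hba : b - a = c := by omega
  rw [hba]
  have hqlow : 10 ^ p' ≤ q := by
    rw [hq, Nat.le_div_iff_mul_le (by positivity)]
    calc 10 ^ p' * (10 * E) = 10 ^ (k + (p' + 1)) := by rw [hE]; ring
    _ ≤ j := hjl
  have hsum : j = (10 * q * E + a * E + r) + c * E := by
    rw [hdec, hd0b, hc]; ring
  have hj' : j - c * E = 10 * q * E + a * E + r := by omega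
  set j' := j - c * E with hj'def
  have hj'low : 10 ^ (k + (p' + 1)) ≤ j' := by
    have h1 : 10 ^ p' * E ≤ q * E := Nat.mul_le_mul_right E hqlow
    have h2 : 10 ^ (k + (p' + 1)) = 10 * (10 ^ p' * E) := by rw [hE]; ring
    rw [hj', h2]
    nlinarith
  have hj'up : j' < 10 ^ (k + (p' + 1) + 1) := lt_of_le_of_lt (Nat.sub_le _ _) hju
  have hlogj' : Nat.log 10 j' = k + (p' + 1) := Nat.log_eq_of_pow_le_of_lt_pow hj'low hj'up
  refine ⟨?_, ?_, by rw [hlogj', hk], by omega⟩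
  · rw [pthDigit, hlogj']
    have : k + (p' + 1) + 1 - (p' + 2) = k := by omega
    rw [this, ← hE]
    have hdiv' : j' / E = 10 * q + a := by
      rw [hj']
      have : 10 * q * E + a * E + r = r + (10 * q + a) * E := by ring
      rw [this, Nat.add_mul_div_right _ _ hE0, Nat.div_eq_of_lt hrE]
      omega
    rw [hdiv']
    omega
  · rw [hps]
    calc 10 ^ (p' + 1) ≤ 10 ^ (k + (p' + 1)) :=
          Nat.pow_le_pow_right (by norm_num) (by omega)
    _ ≤ j' := hj'low

lemma digitCount_le (p : ℕ) (hp : 2 ≤ p) {a b : ℕ} (hb : b ≤ 9) (hab : a < b) (i : ℕ) :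
    digitCount p b i ≤ digitCount p a i := by
  unfold digitCount
  apply Finset.card_le_card_of_injOn (fun j => j - (b - a) * 10 ^ (Nat.log 10 j + 1 - p))
  · intro j hj
    simp only [Finset.mem_coe, Finset.mem_filter, Finset.mem_Icc] at hj ⊢
    obtain ⟨⟨h1, h2⟩, h3⟩ := hj
    obtain ⟨hd, hm, hlog, heq⟩ := key p a b j hp hb hab h1 h3
    exact ⟨⟨hm, le_trans (Nat.sub_le _ _) h2⟩, hd⟩
  · intro j1 h1 j2 h2 hf
    simp only [Finset.coe_filter, Set.mem_setOf_eq, Finset.mem_Icc] at h1 h2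
    obtain ⟨_, _, hlog1, heq1⟩ := key p a b j1 hp hb hab h1.1.1 h1.2
    obtain ⟨_, _, hlog2, heq2⟩ := key p a b j2 hp hb hab h2.1.1 h2.2
    simp only at hf
    have hl : Nat.log 10 j1 = Nat.log 10 j2 := by rw [← hlog1, ← hlog2, hf]
    rw [hl] at heq1 hf
    omega

lemma pthDigit_small (p t : ℕ) (hp : 2 ≤ p) (ht : t ≤ 8) : pthDigit p (10 ^ (p - 1) + t) = t := by
  have hm : 10 ≤ 10 ^ (p - 1) := by
    calc (10:ℕ) = 10 ^ 1 := (pow_one 10).symm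
    _ ≤ 10 ^ (p - 1) := Nat.pow_le_pow_right (by norm_num) (by omega)
  have hup : 10 ^ (p - 1) + t < 10 ^ (p - 1 + 1) := by
    have : 10 ^ (p - 1 + 1) = 10 * 10 ^ (p - 1) := by ring
    omega
  have hlog : Nat.log 10 (10 ^ (p - 1) + t) = p - 1 :=
    Nat.log_eq_of_pow_le_of_lt_pow (Nat.le_add_right _ _) hup
  rw [pthDigit, hlog]
  have h0 : p - 1 + 1 - p = 0 := by omega
  rw [h0, pow_zero, Nat.div_one]
  have hdvd : (10:ℕ) ∣ 10 ^ (p - 1) := dvd_pow_self 10 (by omega)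
  have := Nat.mod_eq_zero_of_dvd hdvd
  omega

lemma digitCount_strict (p : ℕ) (hp : 2 ≤ p) {a b : ℕ} (hb : b ≤ 9) (hab : a < b) :
    digitCount p b (10 ^ (p - 1) + a) = 0 ∧ 1 ≤ digitCount p a (10 ^ (p - 1) + a) := by
  have ha8 : a ≤ 8 := by omega
  constructor
  · rw [digitCount, Finset.card_eq_zero, Finset.filter_eq_empty_iff]
    intro j hj
    rw [Finset.mem_Icc] at hj
    obtain ⟨t, rfl⟩ : ∃ t, j = 10 ^ (p - 1) + t := ⟨j - 10 ^ (p - 1), by omega⟩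
    rw [pthDigit_small p t hp (by omega)]
    omega
  · rw [digitCount, Nat.one_le_iff_ne_zero, ← Nat.pos_iff_ne_zero, Finset.card_pos]
    exact ⟨10 ^ (p - 1) + a, Finset.mem_filter.mpr
      ⟨Finset.mem_Icc.mpr ⟨Nat.le_add_right _ _, le_refl _⟩, pthDigit_small p a hp ha8⟩⟩

theorem stmt5 (p : ℕ) (hp : 2 ≤ p) :
    ∀ n, 10 ^ (p - 1) + 9 ≤ n → ∀ a b : ℕ, a ≤ 9 → b ≤ 9 → a < b →
      Pdig p b n < Pdig p a n := by
  intro n hn a b ha hb hab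
  have hmR : ((10 ^ (p - 1) : ℕ) : ℝ) = (10:ℝ) ^ (p - 1) := by push_cast; ring
  have hnR : ((10 ^ (p - 1) : ℕ) : ℝ) + 9 ≤ (n : ℝ) := by
    have := hn; exact_mod_cast Nat.cast_le.mpr hn |>.trans_eq' (by push_cast; ring)
  unfold Pdig
  have hc : (0:ℝ) < 1 / ((n : ℝ) + 1 - 10 ^ (p - 1)) := by
    apply div_pos one_pos
    rw [← hmR] at *
    linarith
  apply mul_lt_mul_of_pos_left _ hc
  apply Finset.sum_lt_sum
  · intro i hi
    rw [Finset.mem_Icc] at hi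
    have hD : (0:ℝ) ≤ (i : ℝ) + 1 - 10 ^ (p - 1) := by
      have : ((10 ^ (p - 1) : ℕ) : ℝ) ≤ (i : ℝ) := Nat.cast_le.mpr hi.1
      rw [hmR] at this; linarith
    gcongr
    exact_mod_cast digitCount_le p hp hb hab i
  · refine ⟨10 ^ (p - 1) + a, Finset.mem_Icc.mpr ⟨Nat.le_add_right _ _, by omega⟩, ?_⟩
    obtain ⟨hz, hone⟩ := digitCount_strict p hp hb hab
    rw [hz]
    have hD : (0:ℝ) < ((10 ^ (p - 1) + a : ℕ) : ℝ) + 1 - 10 ^ (p - 1) := by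
      push_cast; linarith [Nat.cast_nonneg (α := ℝ) a]
    have hnum : (0:ℝ) < (digitCount p a (10 ^ (p - 1) + a) : ℝ) := by exact_mod_cast hone
    simp only [Nat.cast_zero, zero_div]
    positivity
end
end

section
/- Let $p \ge 2$, $d \in \{0,\dots,9\}$, and $n \ge 10^{p-1}$, and define $P_{(d,n,p)}$ as in the two-stage uniform model. For all $a, b \in \{0,\dots,9\}$ with $a < b$ one has $P_{(a,n,p)} \ge P_{(b,n,p)}$. -/
open Finset Real Filter

noncomputable section

lemma key_step (p a b j : ℕ) (hp : 2 ≤ p) (hb : b ≤ 9) (hab : a < b)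
    (hj : 10 ^ (p - 1) ≤ j) (hd : pthDigit p j = b) :
    10 ^ (p - 1) ≤ j - (b - a) * 10 ^ (Nat.log 10 j + 1 - p) ∧
    (j - (b - a) * 10 ^ (Nat.log 10 j + 1 - p)) + (b - a) * 10 ^ (Nat.log 10 j + 1 - p) = j ∧
    pthDigit p (j - (b - a) * 10 ^ (Nat.log 10 j + 1 - p)) = a ∧
    Nat.log 10 (j - (b - a) * 10 ^ (Nat.log 10 j + 1 - p)) = Nat.log 10 j := by
  have hj0 : j ≠ 0 := by
    have : 0 < 10 ^ (p - 1) := Nat.pow_pos (by norm_num)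
    omega
  set m := Nat.log 10 j with hmdef
  have hm : p - 1 ≤ m := (Nat.le_log_iff_pow_le (by norm_num) hj0).2 hj
  set e := m + 1 - p with hedef
  have hpe : (p - 1) + e = m := by omega
  set q := j / 10 ^ e with hqdef
  have hq10 : q % 10 = b := hd
  have hqb : b ≤ q := by
    have := Nat.mod_le q 10
    omega
  have hXpos : 0 < 10 ^ e := Nat.pow_pos (by norm_num)
  have hdm : j = q * 10 ^ e + j % 10 ^ e := by rw [mul_comm]; exact (Nat.div_add_mod j (10 ^ e)).symm
  have hr : j % 10 ^ e < 10 ^ e := Nat.mod_lt _ hXpos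
  have hq_ge : 10 ^ (p - 1) ≤ q := by
    rw [hqdef, Nat.le_div_iff_mul_le hXpos]
    calc 10 ^ (p - 1) * 10 ^ e = 10 ^ m := by rw [← pow_add, hpe]
    _ ≤ j := Nat.pow_log_le_self 10 hj0
  have hq10' : q = 10 * (q / 10) + b := by
    have := Nat.div_add_mod q 10
    omega
  have hqd_ge : 10 ^ (p - 2) ≤ q / 10 := by
    rw [Nat.le_div_iff_mul_le (by norm_num)]
    calc 10 ^ (p - 2) * 10 = 10 ^ (p - 1) := by
          rw [← pow_succ]; congr 1; omega
    _ ≤ q := hq_ge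
  have hq' : q - (b - a) = 10 * (q / 10) + a := by omega
  have h10 : 10 ^ (p - 1) = 10 ^ (p - 2) * 10 := by
    rw [← pow_succ]; congr 1; omega
  have hq'_ge : 10 ^ (p - 1) ≤ q - (b - a) := by omega
  have hsplit : j - (b - a) * 10 ^ e = (q - (b - a)) * 10 ^ e + j % 10 ^ e := by
    have h1 : (b - a) * 10 ^ e ≤ q * 10 ^ e := Nat.mul_le_mul_right _ (by omega)
    have h2 : (q - (b - a)) * 10 ^ e = q * 10 ^ e - (b - a) * 10 ^ e := Nat.sub_mul q (b - a) _
    omega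
  have hge_m : 10 ^ m ≤ j - (b - a) * 10 ^ e := by
    rw [hsplit]
    calc 10 ^ m = 10 ^ (p - 1) * 10 ^ e := by rw [← pow_add, hpe]
    _ ≤ (q - (b - a)) * 10 ^ e := Nat.mul_le_mul_right _ hq'_ge
    _ ≤ _ := Nat.le_add_right _ _
  have hle : j - (b - a) * 10 ^ e ≤ j := Nat.sub_le _ _
  have hlt : j - (b - a) * 10 ^ e < 10 ^ (m + 1) :=
    lt_of_le_of_lt hle (Nat.lt_pow_succ_log_self (by norm_num) j)
  have hlog' : Nat.log 10 (j - (b - a) * 10 ^ e) = m :=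
    Nat.log_eq_of_pow_le_of_lt_pow hge_m hlt
  have hdiv : (j - (b - a) * 10 ^ e) / 10 ^ e = q - (b - a) := by
    rw [hsplit, mul_comm, Nat.mul_add_div hXpos, Nat.div_eq_of_lt hr, Nat.add_zero]
  have hdig' : pthDigit p (j - (b - a) * 10 ^ e) = a := by
    show (j - (b - a) * 10 ^ e) / 10 ^ (Nat.log 10 (j - (b - a) * 10 ^ e) + 1 - p) % 10 = a
    rw [hlog']
    rw [show m + 1 - p = e from rfl, hdiv, hq', Nat.mul_add_mod]
    exact Nat.mod_eq_of_lt (by omega)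
  refine ⟨le_trans ?_ hge_m, Nat.sub_add_cancel ?_, hdig', hlog'⟩
  · exact Nat.pow_le_pow_right (by norm_num) hm
  · calc (b - a) * 10 ^ e ≤ q * 10 ^ e := Nat.mul_le_mul_right _ (by omega)
    _ ≤ j := by omega

lemma dc_mono (p a b i : ℕ) (hp : 2 ≤ p) (hb : b ≤ 9) (hab : a < b) :
    digitCount p b i ≤ digitCount p a i := by
  unfold digitCount
  apply Finset.card_le_card_of_injOn (fun j => j - (b - a) * 10 ^ (Nat.log 10 j + 1 - p))
  · intro j hj
    simp only [Finset.mem_coe, Finset.mem_filter, Finset.mem_Icc] at hj ⊢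
    obtain ⟨⟨h1, h2⟩, h3⟩ := hj
    obtain ⟨k1, k2, k3, k4⟩ := key_step p a b j hp hb hab h1 h3
    exact ⟨⟨k1, by omega⟩, k3⟩
  · intro x hx y hy hxy
    simp only [Finset.coe_filter, Set.mem_setOf_eq, Finset.mem_Icc] at hx hy
    obtain ⟨kx1, kx2, kx3, kx4⟩ := key_step p a b x hp hb hab hx.1.1 hx.2
    obtain ⟨ky1, ky2, ky3, ky4⟩ := key_step p a b y hp hb hab hy.1.1 hy.2
    simp only at hxy
    have hlog : Nat.log 10 x = Nat.log 10 y := by rw [← kx4, hxy, ky4]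
    have hpow : (b - a) * 10 ^ (Nat.log 10 x + 1 - p) = (b - a) * 10 ^ (Nat.log 10 y + 1 - p) := by
      rw [hlog]
    omega

theorem stmt6 (p n : ℕ) (hp : 2 ≤ p) (hn : 10 ^ (p - 1) ≤ n) :
    ∀ a b : ℕ, a ≤ 9 → b ≤ 9 → a < b → Pdig p b n ≤ Pdig p a n := by
  intro a b ha hb hab
  unfold Pdig
  have hcast : ((10 : ℝ) ^ (p - 1)) ≤ (n : ℝ) := by exact_mod_cast hn
  have hden : (0 : ℝ) ≤ 1 / ((n : ℝ) + 1 - 10 ^ (p - 1)) := by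
    apply div_nonneg (by norm_num)
    linarith
  apply mul_le_mul_of_nonneg_left _ hden
  apply Finset.sum_le_sum
  intro i hi
  rw [Finset.mem_Icc] at hi
  have hi' : (0 : ℝ) < (i : ℝ) + 1 - 10 ^ (p - 1) := by
    have : ((10 : ℝ) ^ (p - 1)) ≤ (i : ℝ) := by exact_mod_cast hi.1
    linarith
  have hdc := dc_mono p a b i hp hb hab
  gcongr
end
end

section
/- Let $p \ge 2$ and $d \in \{0,\dots,9\}$, and let $N \ge 10^{p-1}$ be an integer whose $p$-th digit is NOT $d$. Write $10^{p+k} \le N < 10^{p+k+1}$ with $k \ge -1$, and let $t$ be the number of indices $j \in \{10^{p-2},\dots,10^{p-1}-1\}$ such that the whole block $[(10j+d)10^{k+1}, (10j+d+1)10^{k+1}-1]$ lies in $[10^{p+k}, N]$. Then the number of integers $m$ with $10^{p-1} \le m \le N$ whose $p$-th digit is $d$ equals $10^{k+1}(10^{p-2}+t) - 10^{p-2}$. -/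
open Finset Real Filter

noncomputable section

lemma split_card_aux (a b c : ℕ) (P : ℕ → Prop) [DecidablePred P] (hb : 1 ≤ b)
    (hab : a ≤ b) (hbc : b ≤ c + 1) :
    ((Finset.Icc a c).filter P).card
      = ((Finset.Icc a (b - 1)).filter P).card + ((Finset.Icc b c).filter P).card := by
  have hu : Finset.Icc a c = Finset.Icc a (b - 1) ∪ Finset.Icc b c := by
    ext m
    simp only [Finset.mem_coe, Finset.mem_union, Finset.mem_Icc]
    omega
  rw [hu, Finset.filter_union, Finset.card_union_of_disjoint]
  rw [Finset.disjoint_left]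
  intro m hm1 hm2
  simp only [Finset.mem_coe, Finset.mem_filter, Finset.mem_Icc] at hm1 hm2
  omega

lemma card_block_aux (q a b d : ℕ) (hq : 0 < q) (hb : 0 < b) :
    ((Finset.Icc (a * q) (b * q - 1)).filter (fun m => m / q % 10 = d)).card
      = ((Finset.Icc a (b - 1)).filter (fun c => c % 10 = d)).card * q := by
  have hcp : (((Finset.Icc a (b - 1)).filter (fun c => c % 10 = d)) ×ˢ Finset.range q).card
      = ((Finset.Icc a (b - 1)).filter (fun c => c % 10 = d)).card * q := by
    rw [Finset.card_product, Finset.card_range]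
  rw [← hcp]
  apply Finset.card_nbij' (fun m => (m / q, m % q)) (fun cr => cr.1 * q + cr.2)
  · intro m hm
    simp only [Finset.mem_coe, Finset.mem_filter, Finset.mem_Icc] at hm
    obtain ⟨⟨h1, h2⟩, h3⟩ := hm
    simp only [Finset.mem_coe, Finset.mem_product, Finset.mem_filter, Finset.mem_Icc, Finset.mem_range]
    refine ⟨⟨⟨?_, ?_⟩, h3⟩, Nat.mod_lt _ hq⟩
    · exact (Nat.le_div_iff_mul_le hq).2 h1
    · have hpos : 0 < b * q := Nat.mul_pos hb hq
      have : m / q < b := by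
        rw [Nat.div_lt_iff_lt_mul hq]
        omega
      omega
  · rintro ⟨c, r⟩ h
    simp only [Finset.mem_coe, Finset.mem_product, Finset.mem_filter, Finset.mem_Icc, Finset.mem_range] at h
    obtain ⟨⟨⟨h1, h2⟩, h3⟩, h4⟩ := h
    simp only [Finset.mem_coe, Finset.mem_filter, Finset.mem_Icc]
    have hdiv : (c * q + r) / q = c := by
      rw [mul_comm, Nat.mul_add_div hq, Nat.div_eq_of_lt h4, add_zero]
    refine ⟨⟨?_, ?_⟩, by rw [hdiv]; exact h3⟩
    · exact le_trans (Nat.mul_le_mul_right q h1) (Nat.le_add_right _ _)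
    · have : c * q + r ≤ (b - 1) * q + (q - 1) := by
        have := Nat.mul_le_mul_right q h2
        omega
      have hbq : (b - 1) * q + (q - 1) = b * q - 1 := by
        rw [Nat.sub_one_mul]
        have : q ≤ b * q := Nat.le_mul_of_pos_left q hb
        omega
      omega
  · intro m hm
    simp only
    rw [mul_comm]
    exact Nat.div_add_mod m q
  · rintro ⟨c, r⟩ h
    simp only [Finset.mem_coe, Finset.mem_product, Finset.mem_filter, Finset.mem_Icc, Finset.mem_range] at h
    obtain ⟨⟨⟨h1, h2⟩, h3⟩, h4⟩ := h
    have hdiv : (c * q + r) / q = c := by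
      rw [mul_comm, Nat.mul_add_div hq, Nat.div_eq_of_lt h4, add_zero]
    have hmod : (c * q + r) % q = r := by
      rw [mul_comm, Nat.mul_add_mod, Nat.mod_eq_of_lt h4]
    simp [hdiv, hmod]

lemma card_mod10_aux (a b d : ℕ) (hd : d ≤ 9) (ha : 1 ≤ a) :
    ((Finset.Icc (10 * a) (10 * b - 1)).filter (fun c => c % 10 = d)).card = b - a := by
  have : ((Finset.Icc (10 * a) (10 * b - 1)).filter (fun c => c % 10 = d)).card
      = (Finset.Icc a (b - 1)).card := by
    symm
    apply Finset.card_nbij' (fun j => 10 * j + d) (fun c => c / 10)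
    · intro j hj
      simp only [Finset.mem_coe, Finset.mem_Icc] at hj
      simp only [Finset.mem_coe, Finset.mem_filter, Finset.mem_Icc]
      omega
    · intro c hc
      simp only [Finset.mem_coe, Finset.mem_filter, Finset.mem_Icc] at hc
      simp only [Finset.mem_coe, Finset.mem_Icc]
      omega
    · intro j _; simp only; omega
    · intro c hc
      simp only [Finset.mem_coe, Finset.mem_filter, Finset.mem_Icc] at hc
      simp only
      omega
  rw [this, Nat.card_Icc]
  omega

lemma pthDigit_eq_aux (p i m : ℕ) (hp : 1 ≤ p) (h1 : 10 ^ (p + i - 1) ≤ m)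
    (h2 : m < 10 ^ (p + i)) : pthDigit p m = m / 10 ^ i % 10 := by
  have hlog : Nat.log 10 m = p + i - 1 :=
    Nat.log_eq_of_pow_le_of_lt_pow h1 (by rwa [show p + i - 1 + 1 = p + i by omega])
  unfold pthDigit
  rw [hlog, show p + i - 1 + 1 - p = i by omega]

lemma full_range_aux (p i d : ℕ) (hp : 2 ≤ p) (hd : d ≤ 9) :
    ((Finset.Icc (10 ^ (p + i - 1)) (10 ^ (p + i) - 1)).filter
      (fun m => pthDigit p m = d)).card = 9 * 10 ^ (p - 2) * 10 ^ i := by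
  rw [Finset.filter_congr (q := fun m => m / 10 ^ i % 10 = d) (fun m hm => by
    simp only [Finset.mem_coe, Finset.mem_Icc] at hm
    have hpow : (0:ℕ) < 10 ^ (p + i) := pow_pos (by norm_num) _
    rw [pthDigit_eq_aux p i m (by omega) hm.1 (by omega)])]
  have e1 : 10 ^ (p + i - 1) = 10 ^ (p - 1) * 10 ^ i := by
    rw [← pow_add]; congr 1; omega
  have e2 : 10 ^ (p + i) = 10 ^ p * 10 ^ i := by
    rw [← pow_add]
  rw [e1, e2, card_block_aux _ _ _ _ (pow_pos (by norm_num) i) (pow_pos (by norm_num) p)]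
  have e3 : 10 ^ (p - 1) = 10 * 10 ^ (p - 2) := by
    rw [← pow_succ']; congr 1; omega
  have e4 : (10:ℕ) ^ p = 10 * 10 ^ (p - 1) := by
    rw [← pow_succ']; congr 1; omega
  rw [e3, e4, card_mod10_aux _ _ _ hd (Nat.one_le_pow _ _ (by norm_num))]
  rw [e3]
  generalize 10 ^ (p - 2) = x
  generalize 10 ^ i = y
  rw [show 10 * x - x = 9 * x by omega]

lemma below_count_aux (p d : ℕ) (hp : 2 ≤ p) (hd : d ≤ 9) : ∀ K : ℕ,
    ((Finset.Icc (10 ^ (p - 1)) (10 ^ (p + K - 1) - 1)).filter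
      (fun m => pthDigit p m = d)).card = 10 ^ (p - 2) * (10 ^ K - 1)
  | 0 => by
      have h : 10 ^ (p + 0 - 1) - 1 < 10 ^ (p - 1) := by
        have : p + 0 - 1 = p - 1 := by omega
        rw [this]
        have : (1:ℕ) ≤ 10 ^ (p - 1) := Nat.one_le_pow _ _ (by norm_num)
        omega
      rw [Finset.Icc_eq_empty (by omega)]
      simp
  | (K + 1) => by
      have hb : (1:ℕ) ≤ 10 ^ (p + K - 1) := Nat.one_le_pow _ _ (by norm_num)
      have hmono : (10:ℕ) ^ (p + K - 1) ≤ 10 ^ (p + K) :=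
        Nat.pow_le_pow_right (by norm_num) (by omega)
      have hK1 : (1:ℕ) ≤ 10 ^ (p + K) := Nat.one_le_pow _ _ (by norm_num)
      rw [show p + (K + 1) - 1 = p + K by omega]
      rw [split_card_aux (10 ^ (p - 1)) (10 ^ (p + K - 1)) (10 ^ (p + K) - 1)
        (fun m => pthDigit p m = d) hb (Nat.pow_le_pow_right (by norm_num) (by omega))
        (by omega)]
      rw [below_count_aux p d hp hd K]
      have hfull : ((Finset.Icc (10 ^ (p + K - 1)) (10 ^ (p + K) - 1)).filter
          (fun m => pthDigit p m = d)).card = 9 * 10 ^ (p - 2) * 10 ^ K :=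
        full_range_aux p K d hp hd
      rw [hfull]
      have h1 : (1:ℕ) ≤ 10 ^ K := Nat.one_le_pow _ _ (by norm_num)
      have h2 : (10:ℕ) ^ (K + 1) = 10 * 10 ^ K := by rw [pow_succ]; ring
      rw [h2]
      generalize 10 ^ (p - 2) = x
      generalize hy : 10 ^ K = y at h1 ⊢
      zify [h1, show (1:ℕ) ≤ 10 * y by omega]
      ring

theorem stmt8 (p d N K : ℕ) (hp : 2 ≤ p) (hd : d ≤ 9)
    (hN : 10 ^ (p - 1) ≤ N) (hdig : pthDigit p N ≠ d)
    (hK1 : 10 ^ (p + K - 1) ≤ N) (hK2 : N < 10 ^ (p + K)) :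
    (digitCount p d N : ℤ) =
      10 ^ K * (10 ^ (p - 2) +
        (((Finset.Icc (10 ^ (p - 2)) (10 ^ (p - 1) - 1)).filter
          (fun j => 10 ^ (p + K - 1) ≤ (10 * j + d) * 10 ^ K ∧
            (10 * j + d + 1) * 10 ^ K - 1 ≤ N)).card : ℤ)) - 10 ^ (p - 2) := by
  have hq : (0:ℕ) < 10 ^ K := pow_pos (by norm_num) K
  have hdig' : N / 10 ^ K % 10 ≠ d := by
    rwa [pthDigit_eq_aux p K N (by omega) hK1 hK2] at hdig
  have hpowle : (10:ℕ) ^ (p - 1) ≤ 10 ^ (p + K - 1) :=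
    Nat.pow_le_pow_right (by norm_num) (by omega)
  have hb1 : (1:ℕ) ≤ 10 ^ (p + K - 1) := Nat.one_le_pow _ _ (by norm_num)
  -- split digitCount
  unfold digitCount
  rw [split_card_aux (10 ^ (p - 1)) (10 ^ (p + K - 1)) N _ hb1 hpowle (by omega),
    below_count_aux p d hp hd K]
  -- the top part
  have hNq : 10 ^ (p - 1) ≤ N / 10 ^ K := (Nat.le_div_iff_mul_le hq).2 (by
    rw [← pow_add, show p - 1 + K = p + K - 1 by omega]; exact hK1)
  have hNqlt : N / 10 ^ K < 10 ^ p := (Nat.div_lt_iff_lt_mul hq).2 (by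
    rwa [← pow_add])
  have htop : ((Finset.Icc (10 ^ (p + K - 1)) N).filter (fun m => pthDigit p m = d)).card
      = (((Finset.Icc (10 ^ (p - 2)) (10 ^ (p - 1) - 1)).filter
          (fun j => 10 ^ (p + K - 1) ≤ (10 * j + d) * 10 ^ K ∧
            (10 * j + d + 1) * 10 ^ K - 1 ≤ N)).card) * 10 ^ K := by
    rw [Finset.filter_congr (q := fun m => m / 10 ^ K % 10 = d) (fun m hm => by
      simp only [Finset.mem_coe, Finset.mem_Icc] at hm
      rw [pthDigit_eq_aux p K m (by omega) hm.1 (by omega)])]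
    have hset : (Finset.Icc (10 ^ (p + K - 1)) N).filter (fun m => m / 10 ^ K % 10 = d)
        = (Finset.Icc (10 ^ (p - 1) * 10 ^ K) (N / 10 ^ K * 10 ^ K - 1)).filter
            (fun m => m / 10 ^ K % 10 = d) := by
      ext m
      simp only [Finset.mem_coe, Finset.mem_filter, Finset.mem_Icc]
      have epow : (10:ℕ) ^ (p - 1) * 10 ^ K = 10 ^ (p + K - 1) := by
        rw [← pow_add]; congr 1; omega
      constructor
      · rintro ⟨⟨h1, h2⟩, h3⟩
        refine ⟨⟨by rw [epow]; exact h1, ?_⟩, h3⟩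
        have hlt : m / 10 ^ K < N / 10 ^ K := by
          rcases lt_or_eq_of_le (Nat.div_le_div_right (c := 10 ^ K) h2) with h | h
          · exact h
          · exact absurd (h ▸ h3) hdig'
        have hm1 : m < (m / 10 ^ K + 1) * 10 ^ K :=
          (Nat.div_lt_iff_lt_mul hq).1 (Nat.lt_succ_self _)
        have hm2 : (m / 10 ^ K + 1) * 10 ^ K ≤ N / 10 ^ K * 10 ^ K :=
          Nat.mul_le_mul_right _ (by omega)
        have hm3 : m < N / 10 ^ K * 10 ^ K := lt_of_lt_of_le hm1 hm2
        omega
      · rintro ⟨⟨h1, h2⟩, h3⟩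
        refine ⟨⟨by rwa [epow] at h1, ?_⟩, h3⟩
        have : N / 10 ^ K * 10 ^ K ≤ N := Nat.div_mul_le_self N _
        omega
    rw [hset, card_block_aux _ _ _ _ hq (by
      have h1 : (1:ℕ) ≤ 10 ^ (p - 1) := Nat.one_le_pow _ _ (by norm_num)
      omega)]
    congr 1
    -- bijection between c-sets and j-sets
    apply Finset.card_nbij' (fun c => c / 10) (fun j => 10 * j + d)
    · intro c hc
      simp only [Finset.mem_coe, Finset.mem_filter, Finset.mem_Icc] at hc
      obtain ⟨⟨h1, h2⟩, h3⟩ := hc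
      simp only [Finset.mem_coe, Finset.mem_filter, Finset.mem_Icc]
      have hc10 : c = 10 * (c / 10) + d := by omega
      have e3 : 10 ^ (p - 1) = 10 * 10 ^ (p - 2) := by
        rw [← pow_succ']; congr 1; omega
      have e4 : (10:ℕ) ^ p = 10 * 10 ^ (p - 1) := by
        rw [← pow_succ']; congr 1; omega
      refine ⟨⟨by omega, by omega⟩, ?_, ?_⟩
      · rw [← hc10, show (10:ℕ) ^ (p + K - 1) = 10 ^ (p - 1) * 10 ^ K by
          rw [← pow_add]; congr 1; omega]
        exact Nat.mul_le_mul_right _ h1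
      · rw [← hc10]
        have hcb : c + 1 ≤ N / 10 ^ K := by omega
        have : (c + 1) * 10 ^ K ≤ N / 10 ^ K * 10 ^ K := Nat.mul_le_mul_right _ hcb
        have : N / 10 ^ K * 10 ^ K ≤ N := Nat.div_mul_le_self N _
        omega
    · intro j hj
      simp only [Finset.mem_coe, Finset.mem_filter, Finset.mem_Icc] at hj
      obtain ⟨⟨h1, h2⟩, h3, h4⟩ := hj
      simp only [Finset.mem_coe, Finset.mem_filter, Finset.mem_Icc]
      refine ⟨⟨?_, ?_⟩, by omega⟩
      · have : 10 ^ (p - 1) * 10 ^ K ≤ (10 * j + d) * 10 ^ K := by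
          rw [← pow_add, show p - 1 + K = p + K - 1 by omega]; exact h3
        exact Nat.le_of_mul_le_mul_right this hq
      · -- (10j+d+1) * 10^K - 1 ≤ N implies 10j+d ≤ N/10^K - 1
        set c := 10 * j + d with hc
        have hcase : (c + 1) * 10 ^ K ≤ N ∨ (c + 1) * 10 ^ K = N + 1 := by omega
        rcases hcase with h | h
        · have : c + 1 ≤ N / 10 ^ K := (Nat.le_div_iff_mul_le hq).2 h
          omega
        · exfalso
          apply hdig'
          have hN' : N = 10 ^ K * c + (10 ^ K - 1) := by
            have : (c + 1) * 10 ^ K = 10 ^ K * c + 10 ^ K := by ring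
            omega
          rw [hN', Nat.mul_add_div hq, Nat.div_eq_of_lt (by omega), add_zero]
          omega
    · intro c hc
      simp only [Finset.mem_coe, Finset.mem_filter, Finset.mem_Icc] at hc
      simp only
      omega
    · intro j _
      simp only
      omega
  rw [htop]
  have h1 : (1:ℕ) ≤ 10 ^ K := Nat.one_le_pow _ _ (by norm_num)
  push_cast [Nat.cast_sub h1]
  ring
end
end

section
/- Let $p \ge 2$ and $d \in \{0,\dots,9\}$. The subsequence $n \mapsto P_{(d,10^n-1,p)}$ (for $n \ge p$) converges, as $n \to \infty$, to $\alpha_{(d,p)} = \frac{1}{10} + \frac{n_{(d,p)} + m_{(d,p)} - 9 l_{(d,p)} - d\, k_{(d,p)}}{9 \cdot 10^{p-1}} + \frac{1}{90}\ln\left(\frac{10^{p-1}+d}{10^{p-1}}\right) + \frac{1}{9}\ln\left(\frac{10^{p}}{10^{p}-10+d+1}\right)$, where $k_{(d,p)} = \sum_{j=10^{p-2}}^{10^{p-1}-1} \ln\frac{10j+d+1}{10j+d}$, $l_{(d,p)} = \sum_{j=10^{p-2}}^{10^{p-1}-1} j \ln\frac{10j+d+1}{10j+d}$, $m_{(d,p)}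 = \sum_{j=10^{p-2}}^{10^{p-1}-2} \ln\frac{10(j+1)+d}{10j+d+1}$, $n_{(d,p)} = \sum_{j=10^{p-2}}^{10^{p-1}-2} j \ln\frac{10(j+1)+d}{10j+d+1}$. -/
open Finset Real Filter
open Topology

noncomputable section

/-- `log y - log x ≤ (y-x)/x` for `0 < x ≤ y`. -/
lemma log_sub_log_le {x y : ℝ} (hx : 0 < x) (hxy : x ≤ y) :
    Real.log y - Real.log x ≤ (y - x) / x := by
  have hy : 0 < y := lt_of_lt_of_le hx hxy
  have h := Real.log_le_sub_one_of_pos (show 0 < y / x by positivity)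
  rw [Real.log_div (ne_of_gt hy) (ne_of_gt hx)] at h
  have : y / x - 1 = (y - x) / x := by field_simp
  linarith [this ▸ h]

/-- `(y-x)/y ≤ log y - log x` for `0 < x ≤ y`. -/
lemma le_log_sub_log {x y : ℝ} (hx : 0 < x) (hxy : x ≤ y) :
    (y - x) / y ≤ Real.log y - Real.log x := by
  have hy : 0 < y := lt_of_lt_of_le hx hxy
  have h := Real.log_le_sub_one_of_pos (show 0 < x / y by positivity)
  rw [Real.log_div (ne_of_gt hx) (ne_of_gt hy)] at h
  have : x / y - 1 = -((y - x) / y) := by field_simp; ring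
  linarith [this ▸ h]

/-- Upper bound for harmonic tail: `∑_{r=x+1}^{T} 1/r ≤ log T - log x` for `1 ≤ x ≤ T`. -/
lemma harm_le_log {x T : ℕ} (hx : 1 ≤ x) (hxT : x ≤ T) :
    ∑ r ∈ Icc (x + 1) T, (1 : ℝ) / r ≤ Real.log T - Real.log x := by
  induction T, hxT using Nat.le_induction with
  | base => simp
  | succ T hT ih =>
    rw [Finset.sum_Icc_succ_top (by omega)]
    have h1 : (1 : ℝ) / (T + 1) ≤ Real.log (T + 1) - Real.log T := by
      have := le_log_sub_log (x := (T : ℝ)) (y := (T : ℝ) + 1)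
        (by exact_mod_cast Nat.lt_of_lt_of_le Nat.zero_lt_one (le_trans hx hT)) (by linarith)
      simpa using this
    push_cast
    push_cast at ih h1
    linarith

/-- Lower bound for harmonic tail: `log(T+1) - log(x+1) ≤ ∑_{r=x+1}^{T} 1/r` for `x ≤ T`. -/
lemma log_le_harm {x T : ℕ} (hxT : x ≤ T) :
    Real.log (T + 1) - Real.log (x + 1) ≤ ∑ r ∈ Icc (x + 1) T, (1 : ℝ) / r := by
  induction T, hxT using Nat.le_induction with
  | base => simp
  | succ T hT ih =>
    rw [Finset.sum_Icc_succ_top (by omega)]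
    have h1 : Real.log ((T : ℝ) + 1 + 1) - Real.log ((T : ℝ) + 1) ≤ 1 / ((T : ℝ) + 1) := by
      have := log_sub_log_le (x := (T : ℝ) + 1) (y := (T : ℝ) + 1 + 1)
        (by positivity) (by linarith)
      simpa using this
    push_cast
    push_cast at ih h1
    linarith

lemma step_low {v : ℕ} (hv : 1 ≤ v) :
    Real.log v ≤ ((v : ℝ) + 1) * Real.log ((v : ℝ) + 1) - (v : ℝ) * Real.log v - 1 := by
  have hv' : (0 : ℝ) < v := by exact_mod_cast hv
  have h := le_log_sub_log (x := (v : ℝ)) (y := (v : ℝ) + 1) hv' (by linarith)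
  have h2 : (1 : ℝ) ≤ ((v : ℝ) + 1) * (Real.log ((v : ℝ) + 1) - Real.log v) := by
    have := mul_le_mul_of_nonneg_left h (by linarith : (0:ℝ) ≤ (v:ℝ)+1)
    rw [show ((v:ℝ)+1) * (((v:ℝ)+1-v)/((v:ℝ)+1)) = 1 by field_simp; ring] at this
    linarith
  nlinarith [h2]

lemma step_high {v : ℕ} (hv : 1 ≤ v) :
    ((v : ℝ) + 1) * Real.log ((v : ℝ) + 1) - (v : ℝ) * Real.log v - 1 ≤ Real.log ((v : ℝ) + 1) := by
  have hv' : (0 : ℝ) < v := by exact_mod_cast hv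
  have h := log_sub_log_le (x := (v : ℝ)) (y := (v : ℝ) + 1) hv' (by linarith)
  have h2 : (v : ℝ) * (Real.log ((v : ℝ) + 1) - Real.log v) ≤ 1 := by
    have := mul_le_mul_of_nonneg_left h (le_of_lt hv')
    rw [show (v:ℝ) * (((v:ℝ)+1-v)/(v:ℝ)) = 1 by field_simp; ring] at this
    linarith
  nlinarith [h2]

/-- `∑_{r=u}^{v-1} log r ≤ v log v - u log u - (v - u)` for `1 ≤ u ≤ v`. -/
lemma sum_log_le {u v : ℕ} (hu : 1 ≤ u) (huv : u ≤ v) :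
    ∑ r ∈ Ico u v, Real.log r ≤
      (v : ℝ) * Real.log v - (u : ℝ) * Real.log u - ((v : ℝ) - u) := by
  induction v, huv using Nat.le_induction with
  | base => simp
  | succ v hv ih =>
    rw [Finset.sum_Ico_succ_top (by omega)]
    have := step_low (v := v) (by omega)
    push_cast
    push_cast at ih this
    linarith

/-- Lower bound: `v log v - u log u - (v-u) - (log v - log u) ≤ ∑_{r=u}^{v-1} log r`. -/
lemma le_sum_log {u v : ℕ} (hu : 1 ≤ u) (huv : u ≤ v) :
    (v : ℝ) * Real.log v - (u : ℝ) * Real.log u - ((v : ℝ) - u)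
      - (Real.log v - Real.log u) ≤ ∑ r ∈ Ico u v, Real.log r := by
  induction v, huv using Nat.le_induction with
  | base => simp
  | succ v hv ih =>
    rw [Finset.sum_Ico_succ_top (by omega)]
    have h1 := step_high (v := v) (by omega)
    have h2 := step_low (v := v) (by omega)
    push_cast
    push_cast at ih h1 h2
    linarith


lemma pthDigit_block {p L j : ℕ} (hp : 1 ≤ p) (hpL : p ≤ L)
    (h1 : 10 ^ (L - 1) ≤ j) (h2 : j < 10 ^ L) :
    pthDigit p j = j / 10 ^ (L - p) % 10 := by
  have hlog : Nat.log 10 j = L - 1 := by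
    apply Nat.log_eq_of_pow_le_of_lt_pow h1
    rwa [show L - 1 + 1 = L by omega]
  unfold pthDigit
  rw [hlog, show L - 1 + 1 - p = L - p by omega]

lemma block_filter {p d L : ℕ} (hp : 2 ≤ p) (hd : d ≤ 9) (hpL : p ≤ L) :
    (Ico (10 ^ (L - 1)) (10 ^ L)).filter (fun j => pthDigit p j = d) =
      (Icc (10 ^ (p - 2)) (10 ^ (p - 1) - 1)).biUnion
        (fun s => Ico ((10 * s + d) * 10 ^ (L - p)) ((10 * s + d + 1) * 10 ^ (L - p))) := by
  have hh : 0 < 10 ^ (L - p) := Nat.pow_pos (by norm_num)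
  have hsplit1 : 10 ^ (L - 1) = 10 ^ (p - 1) * 10 ^ (L - p) := by
    rw [← pow_add]; congr 1; omega
  have hsplit2 : 10 ^ L = 10 ^ p * 10 ^ (L - p) := by
    rw [← pow_add]; congr 1; omega
  have hp1 : (10:ℕ) ^ (p - 1) = 10 * 10 ^ (p - 2) := by
    rw [← pow_succ']; congr 1; omega
  have hp2 : (10:ℕ) ^ p = 10 * 10 ^ (p - 1) := by
    rw [← pow_succ']; congr 1; omega
  ext j
  simp only [mem_filter, mem_Ico, mem_biUnion, mem_Icc]
  constructor
  · rintro ⟨⟨hj1, hj2⟩, hdig⟩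
    rw [pthDigit_block (by omega) hpL hj1 hj2] at hdig
    set h := 10 ^ (L - p) with hdef
    set t := j / h with htdef
    have ht1 : 10 ^ (p - 1) ≤ t := Nat.le_div_iff_mul_le hh |>.2 (by rw [hsplit1] at hj1; exact hj1)
    have ht2 : t < 10 ^ p := Nat.div_lt_iff_lt_mul hh |>.2 (by rw [hsplit2] at hj2; exact hj2)
    have htd : t = 10 * (t / 10) + d := by
      have := Nat.div_add_mod t 10
      omega
    refine ⟨t / 10, ⟨?_, ?_⟩, ?_, ?_⟩
    · omega
    · omega
    · have h1 : t * h ≤ j := Nat.div_mul_le_self j h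
      calc (10 * (t / 10) + d) * h = t * h := by rw [← htd]
        _ ≤ j := h1
    · have h1 : j < (t + 1) * h := by
        have e1 : h * t + j % h = j := by rw [htdef]; exact Nat.div_add_mod j h
        have e2 : j % h < h := Nat.mod_lt j hh
        calc j = h * t + j % h := e1.symm
          _ < h * t + h := by omega
          _ = (t + 1) * h := by ring
      calc j < (t + 1) * h := h1
        _ = (10 * (t / 10) + d + 1) * h := by rw [← htd]
  · rintro ⟨s, ⟨hs1, hs2⟩, hj1, hj2⟩
    set h := 10 ^ (L - p) with hdef
    have hb1 : 10 ^ (L - 1) ≤ j := by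
      rw [hsplit1]
      have hineq : 10 ^ (p - 1) ≤ 10 * s + d := by omega
      calc 10 ^ (p - 1) * h ≤ (10 * s + d) * h := Nat.mul_le_mul_right _ hineq
        _ ≤ j := hj1
    have hb2 : j < 10 ^ L := by
      rw [hsplit2]
      have hK1 : 1 ≤ 10 ^ (p - 1) := Nat.one_le_pow _ _ (by norm_num)
      have hineq : 10 * s + d + 1 ≤ 10 ^ p := by omega
      calc j < (10 * s + d + 1) * h := hj2
        _ ≤ 10 ^ p * h := Nat.mul_le_mul_right _ hineq
    have hdiv : j / h = 10 * s + d := Nat.div_eq_of_lt_le hj1 hj2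
    refine ⟨⟨hb1, hb2⟩, ?_⟩
    rw [pthDigit_block (by omega) hpL hb1 hb2, hdiv]
    omega


/-- reindexing the harmonic tail -/
lemma shift_harm {K j n : ℕ} (hK1 : 1 ≤ K) (hK : K ≤ j) :
    ∑ i ∈ Icc j n, (1 : ℝ) / ((i : ℝ) + 1 - K) =
      ∑ r ∈ Icc (j + 1 - K) (n + 1 - K), (1 : ℝ) / r := by
  rcases Nat.lt_or_ge n j with h | h
  · rw [Finset.Icc_eq_empty (by omega), Finset.Icc_eq_empty (by omega)]
    simp
  · have e1 : Icc j n = (Icc (j - K) (n - K)).map (addRightEmbedding K) := by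
      rw [Finset.map_add_right_Icc]; congr 1 <;> omega
    have e2 : Icc (j + 1 - K) (n + 1 - K) = (Icc (j - K) (n - K)).map (addRightEmbedding 1) := by
      rw [Finset.map_add_right_Icc]; congr 1 <;> omega
    rw [e1, e2, Finset.sum_map, Finset.sum_map]
    apply Finset.sum_congr rfl
    intro x hx
    simp only [addRightEmbedding_apply]
    push_cast
    ring_nf

/-- the double-sum swap -/
lemma swap_sum {K n : ℕ} (f : ℕ → ℝ) (g : ℕ → ℝ) :
    ∑ i ∈ Icc K n, (∑ j ∈ Icc K i, f j) * g i =
      ∑ j ∈ Icc K n, f j * ∑ i ∈ Icc j n, g i := by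
  have h : ∀ (x y : ℕ), x ∈ Icc K n ∧ y ∈ Icc K x ↔ x ∈ Icc y n ∧ y ∈ Icc K n := by
    intro x y; simp only [mem_Icc]; omega
  calc ∑ i ∈ Icc K n, (∑ j ∈ Icc K i, f j) * g i
      = ∑ i ∈ Icc K n, ∑ j ∈ Icc K i, f j * g i := by
        apply Finset.sum_congr rfl; intro i _; rw [Finset.sum_mul]
    _ = ∑ j ∈ Icc K n, ∑ i ∈ Icc j n, f j * g i := Finset.sum_comm' h
    _ = ∑ j ∈ Icc K n, f j * ∑ i ∈ Icc j n, g i := by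
        apply Finset.sum_congr rfl; intro j _; rw [Finset.mul_sum]

/-- splitting `[10^(p-1), 10^N - 1]` into decade blocks -/
lemma sum_blocks {p N : ℕ} (hp : 1 ≤ p) (hN : p ≤ N) (F : ℕ → ℝ) :
    ∑ j ∈ Icc (10 ^ (p - 1)) (10 ^ N - 1), F j =
      ∑ L ∈ Icc p N, ∑ j ∈ Ico (10 ^ (L - 1)) (10 ^ L), F j := by
  induction N, hN using Nat.le_induction with
  | base =>
    rw [Finset.Icc_self, Finset.sum_singleton]
    rw [show Icc (10 ^ (p-1)) (10^p - 1) = Ico (10^(p-1)) (10^p) from by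
      rw [← Finset.Ico_add_one_right_eq_Icc]; congr 1
      have : 1 ≤ (10:ℕ)^p := Nat.one_le_pow _ _ (by norm_num); omega]
  | succ N hN ih =>
    have h1 : 1 ≤ (10:ℕ)^N := Nat.one_le_pow _ _ (by norm_num)
    have h2 : (10:ℕ)^N ≤ 10^(N+1) := Nat.pow_le_pow_right (by norm_num) (by omega)
    have h3 : (10:ℕ)^(p-1) ≤ 10^N := Nat.pow_le_pow_right (by norm_num) (by omega)
    rw [Finset.sum_Icc_succ_top (by omega),
      show Icc (10 ^ (p-1)) (10 ^ (N+1) - 1) = Ico (10^(p-1)) (10^(N+1)) from by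
        rw [← Finset.Ico_add_one_right_eq_Icc]; congr 1
        have : 1 ≤ (10:ℕ)^(N+1) := Nat.one_le_pow _ _ (by norm_num); omega,
      ← Finset.sum_Ico_consecutive F h3 h2,
      show Ico (10^(p-1)) (10^N) = Icc (10^(p-1)) (10^N - 1) from by
        rw [← Finset.Ico_add_one_right_eq_Icc]; congr 1; omega,
      ih, show N + 1 - 1 = N from by omega]

lemma block_sum {p d L : ℕ} (hp : 2 ≤ p) (hd : d ≤ 9) (hpL : p ≤ L) (g : ℕ → ℝ) :
    ∑ j ∈ Ico (10 ^ (L - 1)) (10 ^ L), (if pthDigit p j = d then g j else 0) =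
      ∑ s ∈ Icc (10 ^ (p - 2)) (10 ^ (p - 1) - 1),
        ∑ j ∈ Ico ((10 * s + d) * 10 ^ (L - p)) ((10 * s + d + 1) * 10 ^ (L - p)), g j := by
  have key : ∀ a b : ℕ, a < b →
      Disjoint (Ico ((10*a+d) * 10^(L-p)) ((10*a+d+1) * 10^(L-p)))
        (Ico ((10*b+d) * 10^(L-p)) ((10*b+d+1) * 10^(L-p))) := by
    intro a b hab
    rw [Finset.disjoint_left]
    intro x hx hx'
    simp only [mem_Ico] at hx hx'
    have : (10*a+d+1) * 10^(L-p) ≤ (10*b+d) * 10^(L-p) :=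
      Nat.mul_le_mul_right _ (by omega)
    omega
  rw [← Finset.sum_filter, block_filter hp hd hpL, Finset.sum_biUnion]
  intro a _ b _ hne
  rcases Nat.lt_or_ge a b with h | h
  · exact key a b h
  · exact (key b a (by omega)).symm

/-- The master formula. -/
lemma master {p d N : ℕ} (hp : 2 ≤ p) (hd : d ≤ 9) (hN : p ≤ N) :
    Pdig p d (10 ^ N - 1) =
      (1 / ((10 ^ N - 10 ^ (p - 1) : ℕ) : ℝ)) *
      ∑ L ∈ Icc p N, ∑ s ∈ Icc (10 ^ (p - 2)) (10 ^ (p - 1) - 1),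
        ∑ j ∈ Ico ((10 * s + d) * 10 ^ (L - p)) ((10 * s + d + 1) * 10 ^ (L - p)),
          ∑ r ∈ Icc (j + 1 - 10 ^ (p - 1)) (10 ^ N - 10 ^ (p - 1)), (1 : ℝ) / r := by
  set K := 10 ^ (p - 1) with hK
  set n := 10 ^ N - 1 with hn
  have hKN : K < 10 ^ N := Nat.pow_lt_pow_right (by norm_num) (by omega)
  have h1 : 1 ≤ (10:ℕ) ^ N := Nat.one_le_pow _ _ (by norm_num)
  have hKn : K ≤ n := by omega
  have hpref : ((n : ℕ) : ℝ) + 1 - (10:ℝ) ^ (p-1) = ((10 ^ N - K : ℕ) : ℝ) := by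
    rw [hn, Nat.cast_sub h1, Nat.cast_sub (le_of_lt hKN), hK]
    push_cast
    ring
  unfold Pdig
  rw [← hK, hpref]
  congr 1
  rw [show (10:ℝ)^(p-1) = ((K:ℕ):ℝ) from by rw [hK]; push_cast; rfl]
  have hdc : ∀ i : ℕ, (digitCount p d i : ℝ) =
      ∑ j ∈ Icc K i, (if pthDigit p j = d then (1:ℝ) else 0) := by
    intro i
    unfold digitCount
    rw [Finset.card_filter, ← hK]
    push_cast
    rfl
  calc ∑ i ∈ Icc K n, (digitCount p d i : ℝ) / ((i : ℝ) + 1 - K)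
      = ∑ i ∈ Icc K n, (∑ j ∈ Icc K i, (if pthDigit p j = d then (1:ℝ) else 0))
          * (1 / ((i : ℝ) + 1 - K)) := by
        apply Finset.sum_congr rfl; intro i _
        rw [hdc i, mul_one_div]
    _ = ∑ j ∈ Icc K n, (if pthDigit p j = d then (1:ℝ) else 0)
          * ∑ i ∈ Icc j n, (1 / ((i : ℝ) + 1 - K)) := swap_sum _ _
    _ = ∑ j ∈ Icc K n, (if pthDigit p j = d then
          (∑ r ∈ Icc (j + 1 - K) (10 ^ N - K), (1 : ℝ) / r) else 0) := by
        apply Finset.sum_congr rfl; intro j hj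
        rw [mem_Icc] at hj
        rw [boole_mul, shift_harm (Nat.one_le_pow _ _ (by norm_num)) hj.1,
          show n + 1 - K = 10 ^ N - K from by omega]
    _ = _ := by
        rw [sum_blocks (by omega) hN]
        apply Finset.sum_congr rfl; intro L hL
        rw [mem_Icc] at hL
        exact block_sum hp hd hL.1 _

set_option maxHeartbeats 1000000 in
lemma interval_est {K A h T : ℕ} (hh : 10 ≤ h) (hK : 10 ≤ K) (hKA : K ≤ A)
    (hT : (A + 1) * h - K ≤ T) :
    |(∑ x ∈ Ico (A * h - K) ((A + 1) * h - K), ∑ r ∈ Icc (x + 1) T, (1 : ℝ) / r)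
      - ((h : ℝ) * (Real.log T + 1)
         - (h : ℝ) * (((A : ℝ) + 1) * Real.log ((A : ℝ) + 1) - (A : ℝ) * Real.log A)
         - (h : ℝ) * Real.log h
         + (K : ℝ) * (Real.log ((A : ℝ) + 1) - Real.log A))| ≤ 2 * K + 2 := by
  set u := A * h - K with hu
  set v := (A + 1) * h - K with hv
  -- nat facts
  have hKu : K ≤ A * h := le_trans (by nlinarith) (le_refl _)
  have hu9 : 9 * K ≤ u := by
    have : 10 * K ≤ A * h := by nlinarith
    omega
  have huv : u ≤ v := by
    have : A * h ≤ (A + 1) * h := by nlinarith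
    omega
  have hvu : v - u = h := by
    have e : (A + 1) * h = A * h + h := by ring
    omega
  have hv3u : v ≤ 3 * u := by
    have e : (A + 1) * h = A * h + h := by ring
    have h2u : h ≤ 2 * u := by
      have : K * h ≤ A * h := Nat.mul_le_mul_right _ hKA
      have : 10 * h ≤ K * h := Nat.mul_le_mul_right _ hK
      omega
    omega
  have hu1 : 1 ≤ u := by omega
  have hvT : v ≤ T := hT
  -- real casts
  set Ar := (A : ℝ) with hAr
  set hr := (h : ℝ) with hhr
  set Kr := (K : ℝ) with hKr
  have hArpos : (0:ℝ) < Ar := by rw [hAr]; exact_mod_cast by omega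
  have hhrpos : (0:ℝ) < hr := by rw [hhr]; exact_mod_cast by omega
  have hKrpos : (0:ℝ) < Kr := by rw [hKr]; exact_mod_cast by omega
  have hKr1 : (1:ℝ) ≤ Kr := by rw [hKr]; exact_mod_cast by omega
  have hKA' : Kr ≤ Ar := by rw [hKr, hAr]; exact_mod_cast hKA
  have hur : (u : ℝ) = Ar * hr - Kr := by
    rw [hu, hAr, hhr, hKr]; push_cast [Nat.cast_sub hKu]; ring
  have hvr : (v : ℝ) = (Ar + 1) * hr - Kr := by
    have hKv : K ≤ (A + 1) * h := le_trans hKu (by nlinarith)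
    rw [hv, hAr, hhr, hKr]; push_cast [Nat.cast_sub hKv]; ring
  have hurpos : (0:ℝ) < (u:ℝ) := by exact_mod_cast hu1
  have hvrpos : (0:ℝ) < (v:ℝ) := by exact_mod_cast (by omega : 1 ≤ v)
  have hTrpos : (0:ℝ) < (T:ℝ) := by exact_mod_cast (by omega : 1 ≤ T)
  set Br := Ar + 1 with hBr
  set mstar := hr * (Br * Real.log Br - Ar * Real.log Ar) + hr * Real.log hr
      - Kr * (Real.log Br - Real.log Ar) with hmstar
  -- counting
  have hcard : (Ico u v).card = h := by rw [Nat.card_Ico]; omega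
  -- termwise harmonic bounds
  have hup : ∀ x ∈ Ico u v, (∑ r ∈ Icc (x + 1) T, (1 : ℝ) / r)
      ≤ Real.log T - Real.log x := by
    intro x hx
    rw [mem_Ico] at hx
    exact harm_le_log (by omega) (by omega)
  have hlow : ∀ x ∈ Ico u v, Real.log T - Real.log ((x:ℝ) + 1)
      ≤ (∑ r ∈ Icc (x + 1) T, (1 : ℝ) / r) := by
    intro x hx
    have h1 := log_le_harm (x := x) (T := T) (by rw [mem_Ico] at hx; omega)
    have h2 : Real.log T ≤ Real.log ((T:ℝ) + 1) :=
      Real.log_le_log hTrpos (by linarith)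
    push_cast at h1 ⊢
    linarith
  -- sums of logs
  have hsumlog_low := le_sum_log hu1 huv
  have hsumlog1 : ∑ x ∈ Ico u v, Real.log ((x:ℝ) + 1) = ∑ y ∈ Ico (u+1) (v+1), Real.log y := by
    rw [show Ico (u+1) (v+1) = (Ico u v).map (addRightEmbedding 1) from by
      rw [Finset.map_add_right_Ico], Finset.sum_map]
    apply Finset.sum_congr rfl
    intro x _
    simp only [addRightEmbedding_apply]
    push_cast
    ring_nf
  have hsumlog_hi := sum_log_le (u := u+1) (v := v+1) (by omega) (by omega)
  -- upper bound for the sum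
  have hSup : (∑ x ∈ Ico u v, ∑ r ∈ Icc (x + 1) T, (1 : ℝ) / r)
      ≤ hr * Real.log T - ((v:ℝ) * Real.log v - (u:ℝ) * Real.log u) + hr
        + (Real.log v - Real.log u) := by
    have h1 : (∑ x ∈ Ico u v, ∑ r ∈ Icc (x + 1) T, (1 : ℝ) / r)
        ≤ ∑ x ∈ Ico u v, (Real.log T - Real.log x) := Finset.sum_le_sum hup
    rw [Finset.sum_sub_distrib, Finset.sum_const, hcard] at h1
    have h2 := hsumlog_low
    have hvu' : (v:ℝ) - u = hr := by rw [hur, hvr]; ring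
    rw [hvu'] at h2
    simp only [nsmul_eq_mul] at h1
    rw [hhr] at *
    linarith
  -- lower bound for the sum
  have hSlo : hr * (Real.log T + 1)
      - (((v:ℝ)+1) * Real.log ((v:ℝ)+1) - ((u:ℝ)+1) * Real.log ((u:ℝ)+1))
      ≤ (∑ x ∈ Ico u v, ∑ r ∈ Icc (x + 1) T, (1 : ℝ) / r) := by
    have h1 : ∑ x ∈ Ico u v, (Real.log T - Real.log ((x:ℝ)+1))
        ≤ (∑ x ∈ Ico u v, ∑ r ∈ Icc (x + 1) T, (1 : ℝ) / r) := Finset.sum_le_sum hlow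
    rw [Finset.sum_sub_distrib, Finset.sum_const, hcard, hsumlog1] at h1
    have h2 := hsumlog_hi
    push_cast at h2
    simp only [nsmul_eq_mul] at h1
    have hvu' : (v:ℝ) - u = hr := by rw [hur, hvr]; ring
    rw [hhr] at *
    push_cast at *
    linarith
  -- model comparison (a): mstar - 2Kr ≤ Φv - Φu ≤ mstar + 2Kr
  have hlogBA : Real.log Br - Real.log Ar ≤ 1 := by
    have h1 := log_sub_log_le hArpos (show Ar ≤ Br by rw [hBr]; linarith)
    have h2 : (Br - Ar) / Ar ≤ 1 := by
      rw [hBr, div_le_one hArpos]; linarith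
    linarith
  have hlogBA0 : 0 ≤ Real.log Br - Real.log Ar := by
    have := Real.log_le_log hArpos (show Ar ≤ Br by rw [hBr]; linarith)
    linarith
  have hBh : Real.log Br + Real.log hr = Real.log (Br * hr) :=
    (Real.log_mul (by positivity) (by positivity)).symm
  have hAh : Real.log Ar + Real.log hr = Real.log (Ar * hr) :=
    (Real.log_mul (by positivity) (by positivity)).symm
  have key : ∀ w e : ℝ, 0 < w → w ≤ e → e - w ≤ Kr →
      -Kr ≤ w * (Real.log w - Real.log e) ∧ w * (Real.log w - Real.log e) ≤ 0 := by
    intro w e hw hwe hKre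
    have hlog0 : Real.log w - Real.log e ≤ 0 := by
      have := Real.log_le_log hw hwe
      linarith
    have hlog1 : -((e - w) / w) ≤ Real.log w - Real.log e := by
      have := log_sub_log_le hw hwe
      linarith
    constructor
    · have h2 := mul_le_mul_of_nonneg_left hlog1 (le_of_lt hw)
      have h3 : w * -((e - w) / w) = -(e - w) := by field_simp
      rw [h3] at h2
      linarith
    · exact mul_nonpos_of_nonneg_of_nonpos (le_of_lt hw) hlog0
  -- (a)
  have hvBh : (v:ℝ) ≤ Br * hr := by rw [hvr]; linarith
  have huAh : (u:ℝ) ≤ Ar * hr := by rw [hur]; linarith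
  have hkeyv := key (v:ℝ) (Br * hr) hvrpos hvBh (by rw [hvr]; linarith)
  have hkeyu := key (u:ℝ) (Ar * hr) hurpos huAh (by rw [hur]; linarith)
  have identa : (v:ℝ) * Real.log v - (u:ℝ) * Real.log u - mstar
      = (v:ℝ) * (Real.log v - Real.log (Br * hr)) - (u:ℝ) * (Real.log u - Real.log (Ar * hr)) := by
    rw [← hBh, ← hAh, hmstar, hur, hvr, hBr]; ring
  have hmodA_lo : mstar - 2 * Kr ≤ (v:ℝ) * Real.log v - (u:ℝ) * Real.log u := by
    have := identa
    linarith [hkeyv.1, hkeyu.2]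
  have hmodA_hi : (v:ℝ) * Real.log v - (u:ℝ) * Real.log u ≤ mstar + 2 * Kr := by
    have := identa
    linarith [hkeyv.2, hkeyu.1]
  -- (b)
  have hvBh1 : (v:ℝ) + 1 ≤ Br * hr := by rw [hvr]; linarith
  have huAh1 : (u:ℝ) + 1 ≤ Ar * hr := by rw [hur]; linarith
  have hkeyv1 := key ((v:ℝ)+1) (Br * hr) (by linarith) hvBh1 (by rw [hvr]; linarith)
  have hkeyu1 := key ((u:ℝ)+1) (Ar * hr) (by linarith) huAh1 (by rw [hur]; linarith)
  have identb : ((v:ℝ)+1) * Real.log ((v:ℝ)+1) - ((u:ℝ)+1) * Real.log ((u:ℝ)+1) - mstar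
      = ((v:ℝ)+1) * (Real.log ((v:ℝ)+1) - Real.log (Br * hr))
        - ((u:ℝ)+1) * (Real.log ((u:ℝ)+1) - Real.log (Ar * hr))
        + (Real.log Br - Real.log Ar) := by
    rw [← hBh, ← hAh, hmstar, hur, hvr, hBr]; ring
  have hmodB_lo : mstar - 2 * Kr ≤ ((v:ℝ)+1) * Real.log ((v:ℝ)+1) - ((u:ℝ)+1) * Real.log ((u:ℝ)+1) := by
    have := identb
    linarith [hkeyv1.1, hkeyu1.2, hlogBA0]
  have hmodB_hi : ((v:ℝ)+1) * Real.log ((v:ℝ)+1) - ((u:ℝ)+1) * Real.log ((u:ℝ)+1)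
      ≤ mstar + 2 * Kr + 1 := by
    have := identb
    linarith [hkeyv1.2, hkeyu1.1, hlogBA]
  -- log v - log u ≤ 2
  have hlogvu : Real.log v - Real.log u ≤ 2 := by
    have h1 := log_sub_log_le hurpos (show (u:ℝ) ≤ (v:ℝ) by exact_mod_cast huv)
    have h2 : ((v:ℝ) - u) / u ≤ 2 := by
      rw [div_le_iff₀ hurpos]
      have : (v:ℝ) ≤ 3 * u := by exact_mod_cast hv3u
      linarith
    linarith
  -- combine
  have hEdef : (h : ℝ) * (Real.log T + 1)
      - (h : ℝ) * (((A : ℝ) + 1) * Real.log ((A : ℝ) + 1) - (A : ℝ) * Real.log A)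
      - (h : ℝ) * Real.log h
      + (K : ℝ) * (Real.log ((A : ℝ) + 1) - Real.log A)
      = hr * (Real.log T + 1) - mstar := by
    rw [hmstar, hBr]; ring
  rw [hEdef, abs_le]
  have h2K : (2:ℝ) * K + 2 = 2 * Kr + 2 := by rw [hKr]
  rw [h2K]
  constructor
  · linarith [hSlo, hmodB_hi]
  · linarith [hSup, hmodA_lo, hlogvu]

/-- crude bound for harmonic tails -/
lemma harm_crude {x T : ℕ} (hT : 1 ≤ T) :
    ∑ r ∈ Icc x T, (1 : ℝ) / r ≤ 1 + Real.log T := by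
  have hsub : ∑ r ∈ Icc x T, (1 : ℝ) / r ≤ ∑ r ∈ Icc 1 T, (1 : ℝ) / r := by
    rcases Nat.lt_or_ge x 1 with h | h
    · interval_cases x
      rw [show Icc 0 T = insert 0 (Icc 1 T) from by ext r; simp; omega,
        Finset.sum_insert (by simp)]
      simp
    · apply Finset.sum_le_sum_of_subset_of_nonneg
      · apply Finset.Icc_subset_Icc_left h
      · intro r _ _; positivity
  have h2 : ∑ r ∈ Icc 1 T, (1 : ℝ) / r = 1 + ∑ r ∈ Icc 2 T, (1 : ℝ) / r := by
    rw [Finset.Icc_eq_cons_Ioc hT, Finset.sum_cons,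
      show Ioc 1 T = Icc 2 T from (Finset.Icc_add_one_left_eq_Ioc ..).symm]
    norm_num
  have h3 := harm_le_log (le_refl 1) hT
  norm_num at h3
  simp only [one_div] at hsub h2 ⊢
  linarith

lemma harm_nonneg (x T : ℕ) : (0:ℝ) ≤ ∑ r ∈ Icc x T, (1 : ℝ) / r := by
  apply Finset.sum_nonneg; intro r _; positivity

/-- shifting `j` down by `K` -/
lemma shift_interval {K a b T : ℕ} (hK : K ≤ a) :
    ∑ j ∈ Ico a b, ∑ r ∈ Icc (j + 1 - K) T, (1:ℝ)/r
      = ∑ x ∈ Ico (a - K) (b - K), ∑ r ∈ Icc (x + 1) T, (1:ℝ)/r := by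
  rcases Nat.lt_or_ge b a with h | h
  · rw [Finset.Ico_eq_empty (by omega), Finset.Ico_eq_empty (by omega)]
    simp
  · have e1 : Ico a b = (Ico (a - K) (b - K)).map (addRightEmbedding K) := by
      rw [Finset.map_add_right_Ico]; congr 1 <;> omega
    rw [e1, Finset.sum_map]
    apply Finset.sum_congr rfl
    intro x _
    simp only [addRightEmbedding_apply]
    have e2 : x + K + 1 - K = x + 1 := by omega
    rw [e2]

section main
variable {p d : ℕ}

/-- the total sum -/
noncomputable def Ssum (p d M : ℕ) : ℝ :=
  ∑ m ∈ Icc 0 M, ∑ s ∈ Icc (10^(p-2)) (10^(p-1)-1),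
    ∑ j ∈ Ico ((10*s+d)*10^m) ((10*s+d+1)*10^m),
      ∑ r ∈ Icc (j + 1 - 10^(p-1)) (10^(p+M) - 10^(p-1)), (1:ℝ)/r

/-- the model term -/
noncomputable def Emod (p d M m s : ℕ) : ℝ :=
  (10:ℝ)^m * (Real.log ((10^(p+M) - 10^(p-1) : ℕ) : ℝ) + 1)
    - (10:ℝ)^m * ((10*(s:ℝ)+d+1) * Real.log (10*(s:ℝ)+d+1)
        - (10*(s:ℝ)+d) * Real.log (10*(s:ℝ)+d))
    - (10:ℝ)^m * Real.log ((10:ℝ)^m)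
    + (10:ℝ)^(p-1) * (Real.log (10*(s:ℝ)+d+1) - Real.log (10*(s:ℝ)+d))

lemma total_est (hp : 2 ≤ p) (hd : d ≤ 9) {M : ℕ} (hM : 1 ≤ M) :
    |Ssum p d M - ∑ m ∈ Icc 1 M, ∑ s ∈ Icc (10^(p-2)) (10^(p-1)-1), Emod p d M m s|
      ≤ ((10^(p-1)-10^(p-2) : ℕ):ℝ) * (1 + Real.log ((10^(p+M) - 10^(p-1) : ℕ) : ℝ))
        + M * ((10^(p-1)-10^(p-2) : ℕ):ℝ) * (2 * (10:ℝ)^(p-1) + 2) := by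
  set K := 10^(p-1) with hK
  set T := 10^(p+M) - 10^(p-1) with hT
  have hK10 : 10 ≤ K := by
    rw [hK]
    calc 10 = 10^1 := (pow_one 10).symm
    _ ≤ 10^(p-1) := Nat.pow_le_pow_right (by norm_num) (by omega)
  have hT1 : 1 ≤ T := by
    have h1 : K < 10^(p+M) := Nat.pow_lt_pow_right (by norm_num) (by omega)
    omega
  -- split off m = 0
  have hsplit : Ssum p d M = (∑ s ∈ Icc (10^(p-2)) (10^(p-1)-1),
      ∑ j ∈ Ico ((10*s+d)*10^0) ((10*s+d+1)*10^0),
        ∑ r ∈ Icc (j + 1 - K) T, (1:ℝ)/r)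
      + ∑ m ∈ Icc 1 M, ∑ s ∈ Icc (10^(p-2)) (10^(p-1)-1),
        ∑ j ∈ Ico ((10*s+d)*10^m) ((10*s+d+1)*10^m),
          ∑ r ∈ Icc (j + 1 - K) T, (1:ℝ)/r := by
    rw [Ssum, Finset.Icc_eq_cons_Ioc (by omega), Finset.sum_cons,
      show Ioc 0 M = Icc 1 M from (Finset.Icc_add_one_left_eq_Ioc ..).symm]
  -- bound the m = 0 block
  have hblock0 : |∑ s ∈ Icc (10^(p-2)) (10^(p-1)-1),
      ∑ j ∈ Ico ((10*s+d)*10^0) ((10*s+d+1)*10^0),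
        ∑ r ∈ Icc (j + 1 - K) T, (1:ℝ)/r|
      ≤ ((10^(p-1)-10^(p-2) : ℕ):ℝ) * (1 + Real.log ((T : ℕ) : ℝ)) := by
    have hb : ∀ s ∈ Icc (10^(p-2)) (10^(p-1)-1),
        |∑ j ∈ Ico ((10*s+d)*10^0) ((10*s+d+1)*10^0),
          ∑ r ∈ Icc (j + 1 - K) T, (1:ℝ)/r| ≤ 1 + Real.log ((T : ℕ) : ℝ) := by
      intro s _
      rw [pow_zero, mul_one, mul_one,
        show Ico (10*s+d) (10*s+d+1) = {10*s+d} from by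
          rw [Finset.Ico_add_one_right_eq_Icc, Finset.Icc_self], Finset.sum_singleton]
      rw [abs_of_nonneg (harm_nonneg _ _)]
      exact harm_crude hT1
    calc |∑ s ∈ Icc (10^(p-2)) (10^(p-1)-1), _| ≤ _ := Finset.abs_sum_le_sum_abs _ _
      _ ≤ ∑ s ∈ Icc (10^(p-2)) (10^(p-1)-1), (1 + Real.log ((T : ℕ) : ℝ)) :=
          Finset.sum_le_sum hb
      _ = ((10^(p-1)-10^(p-2) : ℕ):ℝ) * (1 + Real.log ((T : ℕ) : ℝ)) := by
          rw [Finset.sum_const, Nat.card_Icc, nsmul_eq_mul]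
          congr 2
          omega
  -- bound the main blocks
  have hmain : |(∑ m ∈ Icc 1 M, ∑ s ∈ Icc (10^(p-2)) (10^(p-1)-1),
      ∑ j ∈ Ico ((10*s+d)*10^m) ((10*s+d+1)*10^m),
        ∑ r ∈ Icc (j + 1 - K) T, (1:ℝ)/r)
      - ∑ m ∈ Icc 1 M, ∑ s ∈ Icc (10^(p-2)) (10^(p-1)-1), Emod p d M m s|
      ≤ M * ((10^(p-1)-10^(p-2) : ℕ):ℝ) * (2 * (10:ℝ)^(p-1) + 2) := by
    rw [← Finset.sum_sub_distrib]
    have hterm : ∀ m ∈ Icc 1 M,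
        |(∑ s ∈ Icc (10^(p-2)) (10^(p-1)-1),
          ∑ j ∈ Ico ((10*s+d)*10^m) ((10*s+d+1)*10^m),
            ∑ r ∈ Icc (j + 1 - K) T, (1:ℝ)/r)
          - ∑ s ∈ Icc (10^(p-2)) (10^(p-1)-1), Emod p d M m s|
        ≤ ((10^(p-1)-10^(p-2) : ℕ):ℝ) * (2 * (10:ℝ)^(p-1) + 2) := by
      intro m hm
      rw [mem_Icc] at hm
      rw [← Finset.sum_sub_distrib]
      have hs : ∀ s ∈ Icc (10^(p-2)) (10^(p-1)-1),
          |(∑ j ∈ Ico ((10*s+d)*10^m) ((10*s+d+1)*10^m),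
              ∑ r ∈ Icc (j + 1 - K) T, (1:ℝ)/r) - Emod p d M m s|
          ≤ 2 * (10:ℝ)^(p-1) + 2 := by
        intro s hsmem
        rw [mem_Icc] at hsmem
        have hKA : K ≤ 10*s+d := by
          have : (10:ℕ)^(p-1) = 10 * 10^(p-2) := by
            rw [← pow_succ']; congr 1; omega
          omega
        have hKa : K ≤ (10*s+d)*10^m :=
          le_trans hKA (Nat.le_mul_of_pos_right _ (Nat.pow_pos (by norm_num)))
        have h10 : 10 ≤ 10^m := by
          calc 10 = 10^1 := (pow_one 10).symm
          _ ≤ 10^m := Nat.pow_le_pow_right (by norm_num) hm.1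
        have hTbound : (10*s+d+1)*10^m - K ≤ T := by
          have h1 : 10*s+d+1 ≤ 10^p := by
            have e1 : (10:ℕ)^p = 10 * 10^(p-1) := by rw [← pow_succ']; congr 1; omega
            have e2 : (10:ℕ)^(p-1) = 10 * 10^(p-2) := by rw [← pow_succ']; congr 1; omega
            have : 1 ≤ (10:ℕ)^(p-2) := Nat.one_le_pow _ _ (by norm_num)
            omega
          have h2 : (10*s+d+1)*10^m ≤ 10^p * 10^M :=
            Nat.mul_le_mul h1 (Nat.pow_le_pow_right (by norm_num) hm.2)
          have h3 : (10:ℕ)^p * 10^M = 10^(p+M) := by rw [← pow_add]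
          omega
        rw [shift_interval hKa]
        have hie := interval_est (A := 10*s+d) (h := 10^m) (K := K) (T := T)
          h10 hK10 hKA hTbound
        have hcast : Emod p d M m s = ((10^m : ℕ) : ℝ) * (Real.log ((T:ℕ):ℝ) + 1)
            - ((10^m : ℕ) : ℝ) * ((((10*s+d : ℕ) : ℝ) + 1) * Real.log (((10*s+d : ℕ):ℝ) + 1)
                - ((10*s+d : ℕ):ℝ) * Real.log ((10*s+d : ℕ):ℝ))
            - ((10^m : ℕ) : ℝ) * Real.log ((10^m : ℕ) : ℝ)
            + ((K:ℕ) : ℝ) * (Real.log (((10*s+d : ℕ):ℝ) + 1) - Real.log ((10*s+d : ℕ):ℝ)) := by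
          rw [Emod, ← hT]
          simp only [Nat.cast_mul, Nat.cast_add, Nat.cast_pow, Nat.cast_ofNat, hK]
        rw [hcast]
        have h2Kcast : (2 * (10:ℝ)^(p-1) + 2) = 2 * ((K:ℕ):ℝ) + 2 := by
          rw [hK]; push_cast; ring
        rw [h2Kcast]
        exact hie
      calc |∑ s ∈ Icc (10^(p-2)) (10^(p-1)-1), _| ≤ _ := Finset.abs_sum_le_sum_abs _ _
        _ ≤ ∑ s ∈ Icc (10^(p-2)) (10^(p-1)-1), (2 * (10:ℝ)^(p-1) + 2) :=
            Finset.sum_le_sum hs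
        _ = ((10^(p-1)-10^(p-2) : ℕ):ℝ) * (2 * (10:ℝ)^(p-1) + 2) := by
            rw [Finset.sum_const, Nat.card_Icc, nsmul_eq_mul]
            congr 2
            omega
    calc |∑ m ∈ Icc 1 M, _| ≤ _ := Finset.abs_sum_le_sum_abs _ _
      _ ≤ ∑ m ∈ Icc 1 M, ((10^(p-1)-10^(p-2) : ℕ):ℝ) * (2 * (10:ℝ)^(p-1) + 2) :=
          Finset.sum_le_sum hterm
      _ = M * (((10^(p-1)-10^(p-2) : ℕ):ℝ) * (2 * (10:ℝ)^(p-1) + 2)) := by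
          rw [Finset.sum_const, Nat.card_Icc, nsmul_eq_mul,
            show M + 1 - 1 = M from by omega]
      _ = M * ((10^(p-1)-10^(p-2) : ℕ):ℝ) * (2 * (10:ℝ)^(p-1) + 2) := by ring
  rw [hsplit]
  have e : ∀ X Y Z : ℝ, X + Y - Z = X + (Y - Z) := by intro X Y Z; ring
  rw [e]
  exact le_trans (abs_add_le _ _) (add_le_add hblock0 hmain)
end main

lemma geo (M : ℕ) : ∑ m ∈ Icc 1 M, (10:ℝ)^m = ((10:ℝ)^(M+1) - 10) / 9 := by
  induction M with
  | zero => simp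
  | succ M ih =>
    rw [Finset.sum_Icc_succ_top (by omega), ih, pow_succ, pow_succ]
    ring

lemma geo2 (M : ℕ) : ∑ m ∈ Icc 1 M, (m:ℝ) * (10:ℝ)^m
    = ((9*(M:ℝ) - 1) * (10:ℝ)^(M+1) + 10) / 81 := by
  induction M with
  | zero => norm_num
  | succ M ih =>
    rw [Finset.sum_Icc_succ_top (by omega), ih, pow_succ, pow_succ]
    push_cast
    ring

/-- closed form of the model sum -/
lemma Esum {p d : ℕ} (M : ℕ) :
    ∑ m ∈ Icc 1 M, ∑ s ∈ Icc (10^(p-2)) (10^(p-1)-1), Emod p d M m s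
    = (Real.log ((10^(p+M) - 10^(p-1) : ℕ) : ℝ) + 1) * ((10^(p-1)-10^(p-2) : ℕ):ℝ)
        * (((10:ℝ)^(M+1) - 10) / 9)
      - (∑ s ∈ Icc (10^(p-2)) (10^(p-1)-1 : ℕ), ((10*(s:ℝ)+d+1) * Real.log (10*(s:ℝ)+d+1)
          - (10*(s:ℝ)+d) * Real.log (10*(s:ℝ)+d))) * (((10:ℝ)^(M+1) - 10) / 9)
      - ((10^(p-1)-10^(p-2) : ℕ):ℝ) * Real.log 10 * (((9*(M:ℝ) - 1) * (10:ℝ)^(M+1) + 10) / 81)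
      + (10:ℝ)^(p-1) * (∑ s ∈ Icc (10^(p-2)) (10^(p-1)-1 : ℕ),
          (Real.log (10*(s:ℝ)+d+1) - Real.log (10*(s:ℝ)+d))) * M := by
  set Q := ((10^(p-1)-10^(p-2) : ℕ):ℝ) with hQ
  set LT := Real.log ((10^(p+M) - 10^(p-1) : ℕ) : ℝ) with hLT
  set W := ∑ s ∈ Icc (10^(p-2)) (10^(p-1)-1 : ℕ), ((10*(s:ℝ)+d+1) * Real.log (10*(s:ℝ)+d+1)
          - (10*(s:ℝ)+d) * Real.log (10*(s:ℝ)+d)) with hW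
  set κ := ∑ s ∈ Icc (10^(p-2)) (10^(p-1)-1 : ℕ),
          (Real.log (10*(s:ℝ)+d+1) - Real.log (10*(s:ℝ)+d)) with hκ
  have hcard : ((Icc (10^(p-2)) (10^(p-1)-1) : Finset ℕ)).card = 10^(p-1)-10^(p-2) := by
    rw [Nat.card_Icc]
    have : 1 ≤ (10:ℕ)^(p-1) := Nat.one_le_pow _ _ (by norm_num)
    omega
  have inner : ∀ m : ℕ, ∑ s ∈ Icc (10^(p-2)) (10^(p-1)-1), Emod p d M m s
      = Q * ((10:ℝ)^m * (LT + 1)) - (10:ℝ)^m * W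
        - Q * ((10:ℝ)^m * ((m:ℝ) * Real.log 10)) + (10:ℝ)^(p-1) * κ := by
    intro m
    have e1 : ∀ s : ℕ, Emod p d M m s
        = ((10:ℝ)^m * (LT + 1) - (10:ℝ)^m * ((m:ℝ) * Real.log 10))
          + (-(10:ℝ)^m) * ((10*(s:ℝ)+d+1) * Real.log (10*(s:ℝ)+d+1)
              - (10*(s:ℝ)+d) * Real.log (10*(s:ℝ)+d))
          + (10:ℝ)^(p-1) * (Real.log (10*(s:ℝ)+d+1) - Real.log (10*(s:ℝ)+d)) := by
      intro s
      rw [Emod, ← hLT, Real.log_pow]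
      push_cast
      ring
    rw [Finset.sum_congr rfl (fun s _ => e1 s), Finset.sum_add_distrib,
      Finset.sum_add_distrib, Finset.sum_const, ← Finset.mul_sum, ← Finset.mul_sum,
      hcard, ← hW, ← hκ]
    rw [nsmul_eq_mul, ← hQ]
    ring
  rw [Finset.sum_congr rfl (fun m _ => inner m), Finset.sum_add_distrib,
    Finset.sum_sub_distrib, Finset.sum_sub_distrib, ← Finset.mul_sum, ← Finset.mul_sum,
    Finset.sum_const, Nat.card_Icc, nsmul_eq_mul]
  have e2 : ∑ m ∈ Icc 1 M, (10:ℝ)^m * (LT + 1) = (LT+1) * (((10:ℝ)^(M+1) - 10) / 9) := by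
    rw [← Finset.sum_mul, geo]; ring
  have e3 : ∑ m ∈ Icc 1 M, (10:ℝ)^m * W = W * (((10:ℝ)^(M+1) - 10) / 9) := by
    rw [← Finset.sum_mul, geo]; ring
  have e4 : ∑ m ∈ Icc 1 M, (10:ℝ)^m * ((m:ℝ) * Real.log 10)
      = Real.log 10 * (((9*(M:ℝ) - 1) * (10:ℝ)^(M+1) + 10) / 81) := by
    have : ∀ m : ℕ, (10:ℝ)^m * ((m:ℝ) * Real.log 10) = ((m:ℝ) * (10:ℝ)^m) * Real.log 10 := by
      intro m; ring
    rw [Finset.sum_congr rfl (fun m _ => this m), ← Finset.sum_mul, geo2]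
    ring
  rw [e2, e3, e4, show M + 1 - 1 = M from by omega]
  ring

/-- Abstract limit lemma: the closed-form model sum divided by T converges. -/
lemma limit_abstract (W κ K : ℝ) (hK : 0 < K) :
    Tendsto (fun M : ℕ =>
      ((Real.log (K * ((10:ℝ)^(M+1) - 1)) + 1) * (9*K/10) * (((10:ℝ)^(M+1) - 10)/9)
        - W * (((10:ℝ)^(M+1) - 10)/9)
        - (9*K/10) * Real.log 10 * (((9*(M:ℝ) - 1) * (10:ℝ)^(M+1) + 10)/81)
        + K * κ * (M:ℝ)) / (K * ((10:ℝ)^(M+1) - 1))) atTop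
      (𝓝 ((Real.log K + Real.log 10 + 1)/10 + Real.log 10/90 - W/(9*K))) := by
  set Q : ℝ := 9*K/10 with hQ
  set ε : ℕ → ℝ := fun M => (1/10:ℝ)^M with hεdef
  set c : ℕ → ℝ := fun M => Real.log (1 - (1/10:ℝ)^(M+1)) with hcdef
  have hpow : ∀ M : ℕ, (0:ℝ) < (10:ℝ)^(M+1) := fun M => by positivity
  have hpowbig : ∀ M : ℕ, (10:ℝ) ≤ (10:ℝ)^(M+1) := fun M => by
    calc (10:ℝ) = 10^1 := (pow_one 10).symm
    _ ≤ 10^(M+1) := pow_le_pow_right₀ (by norm_num) (by omega)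
  have hεinv : ∀ M : ℕ, ε M = ((10:ℝ)^M)⁻¹ := fun M => by
    rw [hεdef]; simp [one_div, inv_pow]
  -- key log expansion
  have hlog : ∀ M : ℕ, Real.log (K * ((10:ℝ)^(M+1) - 1))
      = Real.log K + ((M:ℝ)+1) * Real.log 10 + c M := by
    intro M
    have h1 : (10:ℝ)^(M+1) - 1 = (10:ℝ)^(M+1) * (1 - (1/10:ℝ)^(M+1)) := by
      have : (10:ℝ)^(M+1) * (1/10:ℝ)^(M+1) = 1 := by
        rw [← mul_pow]; norm_num
      nlinarith [this]
    have h2 : (0:ℝ) < 1 - (1/10:ℝ)^(M+1) := by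
      have : (1/10:ℝ)^(M+1) ≤ (1/10:ℝ)^1 := by
        apply pow_le_pow_of_le_one (by norm_num) (by norm_num) (by omega)
      norm_num at this ⊢
      linarith
    rw [Real.log_mul (ne_of_gt hK) (by nlinarith [hpowbig M]), h1,
      Real.log_mul (by positivity) (ne_of_gt h2), Real.log_pow]
    rw [hcdef]
    push_cast
    ring
  -- rewrite the function as Num/Den
  have eq1 : ∀ M : ℕ,
      ((Real.log (K * ((10:ℝ)^(M+1) - 1)) + 1) * Q * (((10:ℝ)^(M+1) - 10)/9)
        - W * (((10:ℝ)^(M+1) - 10)/9)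
        - Q * Real.log 10 * (((9*(M:ℝ) - 1) * (10:ℝ)^(M+1) + 10)/81)
        + K * κ * (M:ℝ)) / (K * ((10:ℝ)^(M+1) - 1))
      = (Q * (Real.log K + Real.log 10 + c M + 1) * (1 - ε M)/9
          + Q * Real.log 10 * (1 - ε M - 9*((M:ℝ)*(ε M)))/81
          - W * (1 - ε M)/9 + K * κ * ((M:ℝ) * ε M)/10)
        / (K * (1 - (ε M)/10)) := by
    intro M
    have hx : (10:ℝ)^M ≠ 0 := by positivity
    have hnum : (Real.log (K * ((10:ℝ)^(M+1) - 1)) + 1) * Q * (((10:ℝ)^(M+1) - 10)/9)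
        - W * (((10:ℝ)^(M+1) - 10)/9)
        - Q * Real.log 10 * (((9*(M:ℝ) - 1) * (10:ℝ)^(M+1) + 10)/81)
        + K * κ * (M:ℝ)
        = (Q * (Real.log K + Real.log 10 + c M + 1) * (1 - ε M)/9
          + Q * Real.log 10 * (1 - ε M - 9*((M:ℝ)*(ε M)))/81
          - W * (1 - ε M)/9 + K * κ * ((M:ℝ) * ε M)/10) * (10:ℝ)^(M+1) := by
      rw [hlog M, hεinv M, pow_succ]
      field_simp
      ring
    have hden : K * ((10:ℝ)^(M+1) - 1) = (K * (1 - (ε M)/10)) * (10:ℝ)^(M+1) := by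
      rw [hεinv M, pow_succ]
      field_simp
    rw [hnum, hden, mul_div_mul_right _ _ (by positivity : ((10:ℝ)^(M+1)) ≠ 0)]
  simp only [eq1]
  -- limits of the pieces
  have hε0 : Tendsto ε atTop (𝓝 0) := by
    rw [hεdef]
    exact tendsto_pow_atTop_nhds_zero_of_lt_one (by norm_num) (by norm_num)
  have hMε0 : Tendsto (fun M : ℕ => (M:ℝ) * ε M) atTop (𝓝 0) := by
    rw [hεdef]
    exact tendsto_self_mul_const_pow_of_lt_one (by norm_num) (by norm_num)
  have hc0 : Tendsto c atTop (𝓝 0) := by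
    have h1 : Tendsto (fun M : ℕ => 1 - (1/10:ℝ)^(M+1)) atTop (𝓝 1) := by
      have h2 : Tendsto (fun M : ℕ => (1/10:ℝ)^(M+1)) atTop (𝓝 0) := by
        have := hε0.const_mul (1/10:ℝ)
        simp only [mul_zero] at this
        convert this using 2 with M
        rw [pow_succ]
        ring
      have := (tendsto_const_nhds : Tendsto (fun _ : ℕ => (1:ℝ)) atTop (𝓝 1)).sub h2
      simpa using this
    have h3 := (Real.continuousAt_log (by norm_num : (1:ℝ) ≠ 0)).tendsto.comp h1
    rw [Real.log_one] at h3
    exact h3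
  -- assemble
  have l1 : Tendsto (fun M : ℕ => Real.log K + Real.log 10 + c M + 1) atTop
      (𝓝 (Real.log K + Real.log 10 + 0 + 1)) :=
    (tendsto_const_nhds.add hc0).add tendsto_const_nhds
  have t1 : Tendsto (fun M : ℕ => Q * (Real.log K + Real.log 10 + c M + 1) * (1 - ε M)/9)
      atTop (𝓝 (Q * (Real.log K + Real.log 10 + 0 + 1) * (1 - 0)/9)) :=
    ((l1.const_mul Q).mul (tendsto_const_nhds.sub hε0)).div_const 9
  have t2 : Tendsto (fun M : ℕ => Q * Real.log 10 * (1 - ε M - 9*((M:ℝ)*(ε M)))/81)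
      atTop (𝓝 (Q * Real.log 10 * (1 - 0 - 9*0)/81)) :=
    (((tendsto_const_nhds.sub hε0).sub (hMε0.const_mul 9)).const_mul (Q * Real.log 10)).div_const 81
  have t3 : Tendsto (fun M : ℕ => W * (1 - ε M)/9) atTop (𝓝 (W * (1 - 0)/9)) :=
    ((tendsto_const_nhds.sub hε0).const_mul W).div_const 9
  have t4 : Tendsto (fun M : ℕ => K * κ * ((M:ℝ) * ε M)/10) atTop (𝓝 (K * κ * 0/10)) :=
    (hMε0.const_mul (K * κ)).div_const 10
  have hNum : Tendsto (fun M : ℕ =>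
      Q * (Real.log K + Real.log 10 + c M + 1) * (1 - ε M)/9
        + Q * Real.log 10 * (1 - ε M - 9*((M:ℝ)*(ε M)))/81
        - W * (1 - ε M)/9 + K * κ * ((M:ℝ) * ε M)/10) atTop
      (𝓝 ((Q * (Real.log K + Real.log 10 + 0 + 1) * (1 - 0)/9
        + Q * Real.log 10 * (1 - 0 - 9*0)/81) - W * (1 - 0)/9 + K * κ * 0/10)) :=
    ((t1.add t2).sub t3).add t4
  have hDen : Tendsto (fun M : ℕ => K * (1 - (ε M)/10)) atTop (𝓝 (K * (1 - 0/10))) := by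
    exact ((tendsto_const_nhds.sub (hε0.div_const 10)).const_mul K).congr'
      (by filter_upwards with M; ring)
  have := hNum.div hDen (by simpa using ne_of_gt hK)
  convert this using 2
  case e'_3 => rfl
  rw [hQ]
  field_simp
  ring

lemma telescope {p d : ℕ} (hp : 2 ≤ p) :
    (∑ s ∈ Icc (10^(p-2)) (10^(p-1)-1 : ℕ), ((10*(s:ℝ)+d+1) * Real.log (10*(s:ℝ)+d+1)
        - (10*(s:ℝ)+d) * Real.log (10*(s:ℝ)+d)))
    + ((∑ j ∈ Icc (10^(p-2)) (10^(p-1)-2 : ℕ),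
        (j:ℝ) * (Real.log (10*(j:ℝ)+d+10) - Real.log (10*(j:ℝ)+d+1)))
      + (∑ j ∈ Icc (10^(p-2)) (10^(p-1)-2 : ℕ),
        (Real.log (10*(j:ℝ)+d+10) - Real.log (10*(j:ℝ)+d+1)))
      - 9 * (∑ j ∈ Icc (10^(p-2)) (10^(p-1)-1 : ℕ),
        (j:ℝ) * (Real.log (10*(j:ℝ)+d+1) - Real.log (10*(j:ℝ)+d)))
      - (d:ℝ) * (∑ j ∈ Icc (10^(p-2)) (10^(p-1)-1 : ℕ),
        (Real.log (10*(j:ℝ)+d+1) - Real.log (10*(j:ℝ)+d))))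
    = (10:ℝ)^(p-1) * Real.log (10*((10:ℝ)^(p-1) - 1)+d+1)
      - (10:ℝ)^(p-2) * Real.log (10*(10:ℝ)^(p-2)+d) := by
  set a := 10^(p-2) with ha
  set b := 10^(p-1) - 1 with hb
  have ha1 : 1 ≤ a := Nat.one_le_pow _ _ (by norm_num)
  have hba : a + 1 ≤ b := by
    have h1 : (10:ℕ)^(p-1) = 10 * 10^(p-2) := by rw [← pow_succ']; congr 1; omega
    omega
  have hbeq : 10^(p-1) - 2 = b - 1 := by omega
  set F : ℕ → ℝ := fun s => Real.log (10*(s:ℝ)+d) with hF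
  set G : ℕ → ℝ := fun s => Real.log (10*(s:ℝ)+d+1) with hG
  -- rewrite the five sums
  have e1 : (∑ s ∈ Icc a b, ((10*(s:ℝ)+d+1) * Real.log (10*(s:ℝ)+d+1)
        - (10*(s:ℝ)+d) * Real.log (10*(s:ℝ)+d)))
      - 9 * (∑ j ∈ Icc a b, (j:ℝ) * (Real.log (10*(j:ℝ)+d+1) - Real.log (10*(j:ℝ)+d)))
      - (d:ℝ) * (∑ j ∈ Icc a b, (Real.log (10*(j:ℝ)+d+1) - Real.log (10*(j:ℝ)+d)))
      = ∑ s ∈ Icc a b, (((s:ℝ)+1) * G s - (s:ℝ) * F s) := by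
    rw [Finset.mul_sum, Finset.mul_sum, ← Finset.sum_sub_distrib, ← Finset.sum_sub_distrib]
    apply Finset.sum_congr rfl
    intro s _
    rw [hF, hG]
    ring
  have e2 : (∑ j ∈ Icc a (b-1), (j:ℝ) * (Real.log (10*(j:ℝ)+d+10) - Real.log (10*(j:ℝ)+d+1)))
      + (∑ j ∈ Icc a (b-1), (Real.log (10*(j:ℝ)+d+10) - Real.log (10*(j:ℝ)+d+1)))
      = ∑ j ∈ Icc a (b-1), (((j:ℝ)+1) * F (j+1) - ((j:ℝ)+1) * G j) := by
    rw [← Finset.sum_add_distrib]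
    apply Finset.sum_congr rfl
    intro j _
    have harg : 10*((j+1 : ℕ):ℝ)+d = 10*(j:ℝ)+d+10 := by push_cast; ring
    rw [hF, hG]
    simp only [harg]
    ring
  rw [hbeq, show (∑ s ∈ Icc a b, ((10*(s:ℝ)+d+1) * Real.log (10*(s:ℝ)+d+1)
        - (10*(s:ℝ)+d) * Real.log (10*(s:ℝ)+d)))
    + ((∑ j ∈ Icc a (b-1), (j:ℝ) * (Real.log (10*(j:ℝ)+d+10) - Real.log (10*(j:ℝ)+d+1)))
      + (∑ j ∈ Icc a (b-1), (Real.log (10*(j:ℝ)+d+10) - Real.log (10*(j:ℝ)+d+1)))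
      - 9 * (∑ j ∈ Icc a b, (j:ℝ) * (Real.log (10*(j:ℝ)+d+1) - Real.log (10*(j:ℝ)+d)))
      - (d:ℝ) * (∑ j ∈ Icc a b, (Real.log (10*(j:ℝ)+d+1) - Real.log (10*(j:ℝ)+d))))
    = ((∑ s ∈ Icc a b, ((10*(s:ℝ)+d+1) * Real.log (10*(s:ℝ)+d+1)
        - (10*(s:ℝ)+d) * Real.log (10*(s:ℝ)+d)))
      - 9 * (∑ j ∈ Icc a b, (j:ℝ) * (Real.log (10*(j:ℝ)+d+1) - Real.log (10*(j:ℝ)+d)))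
      - (d:ℝ) * (∑ j ∈ Icc a b, (Real.log (10*(j:ℝ)+d+1) - Real.log (10*(j:ℝ)+d))))
    + ((∑ j ∈ Icc a (b-1), (j:ℝ) * (Real.log (10*(j:ℝ)+d+10) - Real.log (10*(j:ℝ)+d+1)))
      + (∑ j ∈ Icc a (b-1), (Real.log (10*(j:ℝ)+d+10) - Real.log (10*(j:ℝ)+d+1)))) from by ring,
    e1, e2]
  -- now pure telescoping
  have treindex : ∑ j ∈ Icc a (b-1), ((j:ℝ)+1) * F (j+1) = ∑ t ∈ Icc (a+1) b, (t:ℝ) * F t := by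
    rw [show Icc (a+1) b = (Icc a (b-1)).map (addRightEmbedding 1) from by
      rw [Finset.map_add_right_Icc]; congr 1; omega, Finset.sum_map]
    apply Finset.sum_congr rfl
    intro x _
    simp only [addRightEmbedding_apply]
    push_cast
    ring
  have tsplit1 : ∑ s ∈ Icc a b, ((s:ℝ)+1) * G s
      = (∑ s ∈ Icc a (b-1), ((s:ℝ)+1) * G s) + ((b:ℝ)+1) * G b := by
    rw [show b = (b-1)+1 from by omega, Finset.sum_Icc_succ_top (by omega),
      show (b-1)+1 = b from by omega]
  have tsplit2 : ∑ s ∈ Icc a b, (s:ℝ) * F s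
      = (a:ℝ) * F a + ∑ s ∈ Icc (a+1) b, (s:ℝ) * F s := by
    rw [Finset.Icc_eq_cons_Ioc (by omega), Finset.sum_cons,
      show Ioc a b = Icc (a+1) b from (Finset.Icc_add_one_left_eq_Ioc ..).symm]
  have key : ∑ s ∈ Icc a b, (((s:ℝ)+1) * G s - (s:ℝ) * F s)
      + ∑ j ∈ Icc a (b-1), (((j:ℝ)+1) * F (j+1) - ((j:ℝ)+1) * G j)
      = ((b:ℝ)+1) * G b - (a:ℝ) * F a := by
    rw [Finset.sum_sub_distrib, Finset.sum_sub_distrib, treindex, tsplit1, tsplit2]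
    ring
  rw [key]
  -- boundary values
  have hcb : (b:ℝ) = (10:ℝ)^(p-1) - 1 := by
    rw [hb]
    have : 1 ≤ (10:ℕ)^(p-1) := Nat.one_le_pow _ _ (by norm_num)
    push_cast [Nat.cast_sub this]
    ring
  have hca : (a:ℝ) = (10:ℝ)^(p-2) := by rw [ha]; push_cast; ring
  rw [hG, hF]
  simp only [hcb, hca]
  ring_nf

lemma err_abstract (c1 c2 K : ℝ) (hK : 0 < K) :
    Tendsto (fun M : ℕ =>
      (c1 * (1 + Real.log (K * ((10:ℝ)^(M+1) - 1))) + (M:ℝ) * c2)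
        / (K * ((10:ℝ)^(M+1) - 1))) atTop (𝓝 0) := by
  set ε : ℕ → ℝ := fun M => (1/10:ℝ)^M with hεdef
  set c : ℕ → ℝ := fun M => Real.log (1 - (1/10:ℝ)^(M+1)) with hcdef
  have hpowbig : ∀ M : ℕ, (10:ℝ) ≤ (10:ℝ)^(M+1) := fun M => by
    calc (10:ℝ) = 10^1 := (pow_one 10).symm
    _ ≤ 10^(M+1) := pow_le_pow_right₀ (by norm_num) (by omega)
  have hεinv : ∀ M : ℕ, ε M = ((10:ℝ)^M)⁻¹ := fun M => by
    rw [hεdef]; simp [one_div, inv_pow]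
  have hlog : ∀ M : ℕ, Real.log (K * ((10:ℝ)^(M+1) - 1))
      = Real.log K + ((M:ℝ)+1) * Real.log 10 + c M := by
    intro M
    have h1 : (10:ℝ)^(M+1) - 1 = (10:ℝ)^(M+1) * (1 - (1/10:ℝ)^(M+1)) := by
      have : (10:ℝ)^(M+1) * (1/10:ℝ)^(M+1) = 1 := by rw [← mul_pow]; norm_num
      nlinarith [this]
    have h2 : (0:ℝ) < 1 - (1/10:ℝ)^(M+1) := by
      have : (1/10:ℝ)^(M+1) ≤ (1/10:ℝ)^1 := by
        apply pow_le_pow_of_le_one (by norm_num) (by norm_num) (by omega)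
      norm_num at this ⊢
      linarith
    rw [Real.log_mul (ne_of_gt hK) (by nlinarith [hpowbig M]), h1,
      Real.log_mul (by positivity) (ne_of_gt h2), Real.log_pow, hcdef]
    push_cast
    ring
  have eq1 : ∀ M : ℕ,
      (c1 * (1 + Real.log (K * ((10:ℝ)^(M+1) - 1))) + (M:ℝ) * c2)
        / (K * ((10:ℝ)^(M+1) - 1))
      = (c1 * (1 + Real.log K + Real.log 10 + c M) * (ε M) / 10
          + (c1 * Real.log 10 + c2) * ((M:ℝ) * ε M) / 10)
        / (K * (1 - (ε M)/10)) := by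
    intro M
    have hx : (10:ℝ)^M ≠ 0 := by positivity
    have hnum : c1 * (1 + Real.log (K * ((10:ℝ)^(M+1) - 1))) + (M:ℝ) * c2
        = (c1 * (1 + Real.log K + Real.log 10 + c M) * (ε M) / 10
          + (c1 * Real.log 10 + c2) * ((M:ℝ) * ε M) / 10) * (10:ℝ)^(M+1) := by
      rw [hlog M, hεinv M, pow_succ]
      field_simp
      ring
    have hden : K * ((10:ℝ)^(M+1) - 1) = (K * (1 - (ε M)/10)) * (10:ℝ)^(M+1) := by
      rw [hεinv M, pow_succ]
      field_simp
    rw [hnum, hden, mul_div_mul_right _ _ (by positivity : ((10:ℝ)^(M+1)) ≠ 0)]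
  simp only [eq1]
  have hε0 : Tendsto ε atTop (𝓝 0) := by
    rw [hεdef]
    exact tendsto_pow_atTop_nhds_zero_of_lt_one (by norm_num) (by norm_num)
  have hMε0 : Tendsto (fun M : ℕ => (M:ℝ) * ε M) atTop (𝓝 0) := by
    rw [hεdef]
    exact tendsto_self_mul_const_pow_of_lt_one (by norm_num) (by norm_num)
  have hc0 : Tendsto c atTop (𝓝 0) := by
    have h2 : Tendsto (fun M : ℕ => (1/10:ℝ)^(M+1)) atTop (𝓝 0) := by
      have := hε0.const_mul (1/10:ℝ)
      simp only [mul_zero] at this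
      convert this using 2 with M
      rw [pow_succ]; ring
    have h1 : Tendsto (fun M : ℕ => 1 - (1/10:ℝ)^(M+1)) atTop (𝓝 1) := by
      have := (tendsto_const_nhds : Tendsto (fun _ : ℕ => (1:ℝ)) atTop (𝓝 1)).sub h2
      simpa using this
    have h3 := (Real.continuousAt_log (by norm_num : (1:ℝ) ≠ 0)).tendsto.comp h1
    rw [Real.log_one] at h3
    exact h3
  have l1 : Tendsto (fun M : ℕ => 1 + Real.log K + Real.log 10 + c M) atTop
      (𝓝 (1 + Real.log K + Real.log 10 + 0)) := tendsto_const_nhds.add hc0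
  have t1 : Tendsto (fun M : ℕ => c1 * (1 + Real.log K + Real.log 10 + c M) * (ε M) / 10)
      atTop (𝓝 (c1 * (1 + Real.log K + Real.log 10 + 0) * 0 / 10)) :=
    ((l1.const_mul c1).mul hε0).div_const 10
  have t2 : Tendsto (fun M : ℕ => (c1 * Real.log 10 + c2) * ((M:ℝ) * ε M) / 10)
      atTop (𝓝 ((c1 * Real.log 10 + c2) * 0 / 10)) :=
    (hMε0.const_mul _).div_const 10
  have hDen : Tendsto (fun M : ℕ => K * (1 - (ε M)/10)) atTop (𝓝 (K * (1 - 0/10))) :=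
    ((tendsto_const_nhds.sub (hε0.div_const 10)).const_mul K)
  have := (t1.add t2).div hDen (by simpa using ne_of_gt hK)
  convert this using 2
  case e'_3 => simp
  ring

lemma P_eq {p d : ℕ} (hp : 2 ≤ p) (hd : d ≤ 9) (M : ℕ) :
    Pdig p d (10^(p+M) - 1) = (1 / ((10^(p+M) - 10^(p-1) : ℕ):ℝ)) * Ssum p d M := by
  rw [master hp hd (by omega : p ≤ p + M)]
  congr 1
  rw [Ssum]
  rw [show Icc p (p+M) = (Icc 0 M).map (addRightEmbedding p) from by
    rw [Finset.map_add_right_Icc]; congr 1 <;> omega]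
  rw [Finset.sum_map]
  apply Finset.sum_congr rfl
  intro m _
  simp only [addRightEmbedding_apply]
  rw [show m + p - p = m from by omega]

theorem stmt11 (p d : ℕ) (hp : 2 ≤ p) (hd : d ≤ 9) :
    Filter.Tendsto (fun n => Pdig p d (10 ^ n - 1)) Filter.atTop
      (nhds (1 / 10 +
      ((∑ j ∈ Finset.Icc (10 ^ (p - 2) : ℕ) (10 ^ (p - 1) - 2),
          (j : ℝ) * Real.log ((10 * j + d + 10) / (10 * j + d + 1))) +
        (∑ j ∈ Finset.Icc (10 ^ (p - 2) : ℕ) (10 ^ (p - 1) - 2),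
          Real.log ((10 * (j : ℝ) + d + 10) / (10 * j + d + 1))) -
        9 * (∑ j ∈ Finset.Icc (10 ^ (p - 2) : ℕ) (10 ^ (p - 1) - 1),
          (j : ℝ) * Real.log ((10 * j + d + 1) / (10 * j + d))) -
        (d : ℝ) * (∑ j ∈ Finset.Icc (10 ^ (p - 2) : ℕ) (10 ^ (p - 1) - 1),
          Real.log ((10 * (j : ℝ) + d + 1) / (10 * j + d)))) / (9 * 10 ^ (p - 1)) +
      (1 / 90) * Real.log (((10 : ℝ) ^ (p - 1) + d) / 10 ^ (p - 1)) +
      (1 / 9) * Real.log ((10 : ℝ) ^ p / ((10 : ℝ) ^ p - 10 + d + 1)))) := by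
  have hKpos : (0:ℝ) < (10:ℝ)^(p-1) := by positivity
  set W := ∑ s ∈ Icc (10^(p-2)) (10^(p-1)-1 : ℕ), ((10*(s:ℝ)+d+1) * Real.log (10*(s:ℝ)+d+1)
          - (10*(s:ℝ)+d) * Real.log (10*(s:ℝ)+d)) with hWdef
  set κ := ∑ s ∈ Icc (10^(p-2)) (10^(p-1)-1 : ℕ),
          (Real.log (10*(s:ℝ)+d+1) - Real.log (10*(s:ℝ)+d)) with hκdef
  have hTcast : ∀ M : ℕ, ((10^(p+M) - 10^(p-1) : ℕ):ℝ)
      = (10:ℝ)^(p-1) * ((10:ℝ)^(M+1) - 1) := by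
    intro M
    have hle : (10:ℕ)^(p-1) ≤ 10^(p+M) := Nat.pow_le_pow_right (by norm_num) (by omega)
    rw [Nat.cast_sub hle]
    push_cast
    rw [show p + M = (p-1) + (M+1) from by omega, pow_add]
    ring
  have hQcast : ((10^(p-1) - 10^(p-2) : ℕ):ℝ) = 9 * (10:ℝ)^(p-1) / 10 := by
    have hle : (10:ℕ)^(p-2) ≤ 10^(p-1) := Nat.pow_le_pow_right (by norm_num) (by omega)
    rw [Nat.cast_sub hle]
    push_cast
    rw [show p - 1 = (p-2) + 1 from by omega, pow_succ]
    ring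
  have hTpos : ∀ M : ℕ, (0:ℝ) < ((10^(p+M) - 10^(p-1) : ℕ):ℝ) := by
    intro M
    rw [hTcast M]
    have h10 : (10:ℝ) ≤ (10:ℝ)^(M+1) := by
      calc (10:ℝ) = 10^1 := (pow_one 10).symm
      _ ≤ 10^(M+1) := pow_le_pow_right₀ (by norm_num) (by omega)
    nlinarith
  -- limit of the model term
  have hlimX : Tendsto (fun M : ℕ =>
      (∑ m ∈ Icc 1 M, ∑ s ∈ Icc (10^(p-2)) (10^(p-1)-1 : ℕ), Emod p d M m s)
        / ((10^(p+M) - 10^(p-1) : ℕ):ℝ)) atTop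
      (𝓝 ((Real.log ((10:ℝ)^(p-1)) + Real.log 10 + 1)/10 + Real.log 10/90
          - W/(9*(10:ℝ)^(p-1)))) := by
    apply (limit_abstract W κ ((10:ℝ)^(p-1)) hKpos).congr
    intro M
    rw [Esum, hTcast M, hQcast]
  -- limit of the error term
  have herr : Tendsto (fun M : ℕ =>
      (((10^(p-1)-10^(p-2) : ℕ):ℝ) * (1 + Real.log ((10^(p+M) - 10^(p-1) : ℕ):ℝ))
        + (M:ℝ) * (((10^(p-1)-10^(p-2) : ℕ):ℝ) * (2*(10:ℝ)^(p-1)+2)))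
        / ((10^(p+M) - 10^(p-1) : ℕ):ℝ)) atTop (𝓝 0) := by
    apply (err_abstract (((10^(p-1)-10^(p-2):ℕ):ℝ))
      ((((10^(p-1)-10^(p-2):ℕ):ℝ)) * (2*(10:ℝ)^(p-1)+2)) ((10:ℝ)^(p-1)) hKpos).congr
    intro M
    rw [hTcast M]
  -- sandwich
  have hub : ∀ᶠ M : ℕ in atTop, Pdig p d (10^(p+M) - 1)
      ≤ (∑ m ∈ Icc 1 M, ∑ s ∈ Icc (10^(p-2)) (10^(p-1)-1 : ℕ), Emod p d M m s)
          / ((10^(p+M) - 10^(p-1) : ℕ):ℝ)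
        + (((10^(p-1)-10^(p-2) : ℕ):ℝ) * (1 + Real.log ((10^(p+M) - 10^(p-1) : ℕ):ℝ))
          + (M:ℝ) * (((10^(p-1)-10^(p-2) : ℕ):ℝ) * (2*(10:ℝ)^(p-1)+2)))
          / ((10^(p+M) - 10^(p-1) : ℕ):ℝ) := by
    filter_upwards [eventually_ge_atTop 1] with M hM
    have hest := total_est hp hd hM
    rw [abs_le] at hest
    rw [P_eq hp hd M, one_div, inv_mul_eq_div, ← add_div, div_le_div_iff_of_pos_right (hTpos M)]
    have h1 := hest.2
    rw [show Real.log ((10 ^ (p + M) - 10 ^ (p - 1) : ℕ) : ℝ)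
      = Real.log ((10 ^ (p + M) - 10 ^ (p - 1) : ℕ) : ℝ) from rfl] at h1
    nlinarith [h1]
  have hlb : ∀ᶠ M : ℕ in atTop,
      (∑ m ∈ Icc 1 M, ∑ s ∈ Icc (10^(p-2)) (10^(p-1)-1 : ℕ), Emod p d M m s)
          / ((10^(p+M) - 10^(p-1) : ℕ):ℝ)
        - (((10^(p-1)-10^(p-2) : ℕ):ℝ) * (1 + Real.log ((10^(p+M) - 10^(p-1) : ℕ):ℝ))
          + (M:ℝ) * (((10^(p-1)-10^(p-2) : ℕ):ℝ) * (2*(10:ℝ)^(p-1)+2)))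
          / ((10^(p+M) - 10^(p-1) : ℕ):ℝ)
        ≤ Pdig p d (10^(p+M) - 1) := by
    filter_upwards [eventually_ge_atTop 1] with M hM
    have hest := total_est hp hd hM
    rw [abs_le] at hest
    rw [P_eq hp hd M, one_div, inv_mul_eq_div, div_sub_div_same, div_le_div_iff_of_pos_right (hTpos M)]
    nlinarith [hest.1]
  have key : Tendsto (fun M : ℕ => Pdig p d (10^(p+M) - 1)) atTop
      (𝓝 ((Real.log ((10:ℝ)^(p-1)) + Real.log 10 + 1)/10 + Real.log 10/90
          - W/(9*(10:ℝ)^(p-1)))) := by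
    have hu := hlimX.add herr
    have hl := hlimX.sub herr
    rw [add_zero] at hu
    rw [sub_zero] at hl
    exact tendsto_of_tendsto_of_tendsto_of_le_of_le' hl hu hlb hub
  -- identify the limit value
  have hVα : (Real.log ((10:ℝ)^(p-1)) + Real.log 10 + 1)/10 + Real.log 10/90
        - W/(9*(10:ℝ)^(p-1))
      = 1 / 10 +
      ((∑ j ∈ Finset.Icc (10 ^ (p - 2) : ℕ) (10 ^ (p - 1) - 2),
          (j : ℝ) * Real.log ((10 * j + d + 10) / (10 * j + d + 1))) +
        (∑ j ∈ Finset.Icc (10 ^ (p - 2) : ℕ) (10 ^ (p - 1) - 2),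
          Real.log ((10 * (j : ℝ) + d + 10) / (10 * j + d + 1))) -
        9 * (∑ j ∈ Finset.Icc (10 ^ (p - 2) : ℕ) (10 ^ (p - 1) - 1),
          (j : ℝ) * Real.log ((10 * j + d + 1) / (10 * j + d))) -
        (d : ℝ) * (∑ j ∈ Finset.Icc (10 ^ (p - 2) : ℕ) (10 ^ (p - 1) - 1),
          Real.log ((10 * (j : ℝ) + d + 1) / (10 * j + d)))) / (9 * 10 ^ (p - 1)) +
      (1 / 90) * Real.log (((10 : ℝ) ^ (p - 1) + d) / 10 ^ (p - 1)) +
      (1 / 9) * Real.log ((10 : ℝ) ^ p / ((10 : ℝ) ^ p - 10 + d + 1)) := by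
    -- convert quotient logs to differences
    have hpos1 : ∀ j : ℕ, j ∈ Icc (10^(p-2)) (10^(p-1)-1 : ℕ) → (0:ℝ) < 10*(j:ℝ)+d := by
      intro j hj
      rw [mem_Icc] at hj
      have h1 : 1 ≤ j := le_trans (Nat.one_le_pow _ _ (by norm_num)) hj.1
      have h2 : (1:ℝ) ≤ (j:ℝ) := by exact_mod_cast h1
      have h0d : (0:ℝ) ≤ (d:ℝ) := Nat.cast_nonneg d
      linarith
    have hsum1 : ∀ j : ℕ, Real.log ((10 * (j:ℝ) + d + 10) / (10 * (j:ℝ) + d + 1))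
        = Real.log (10*(j:ℝ)+d+10) - Real.log (10*(j:ℝ)+d+1) := by
      intro j
      have h0 : (0:ℝ) ≤ (j:ℝ) := Nat.cast_nonneg j
      have h0d : (0:ℝ) ≤ (d:ℝ) := Nat.cast_nonneg d
      rw [Real.log_div (by positivity) (by positivity)]
    have hsum2 : ∀ j ∈ Icc (10^(p-2)) (10^(p-1)-1 : ℕ),
        Real.log ((10 * (j:ℝ) + d + 1) / (10 * (j:ℝ) + d))
        = Real.log (10*(j:ℝ)+d+1) - Real.log (10*(j:ℝ)+d) := by
      intro j hj
      have h1 := hpos1 j hj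
      have h0d : (0:ℝ) ≤ (d:ℝ) := Nat.cast_nonneg d
      rw [Real.log_div (by positivity) (by positivity)]
    have e1 : (∑ j ∈ Icc (10^(p-2)) (10^(p-1)-2 : ℕ),
        (j:ℝ) * Real.log ((10 * (j:ℝ) + d + 10) / (10 * (j:ℝ) + d + 1)))
        = ∑ j ∈ Icc (10^(p-2)) (10^(p-1)-2 : ℕ),
          (j:ℝ) * (Real.log (10*(j:ℝ)+d+10) - Real.log (10*(j:ℝ)+d+1)) := by
      apply Finset.sum_congr rfl
      intro j _
      rw [hsum1 j]
    have e2 : (∑ j ∈ Icc (10^(p-2)) (10^(p-1)-2 : ℕ),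
        Real.log ((10 * (j:ℝ) + d + 10) / (10 * (j:ℝ) + d + 1)))
        = ∑ j ∈ Icc (10^(p-2)) (10^(p-1)-2 : ℕ),
          (Real.log (10*(j:ℝ)+d+10) - Real.log (10*(j:ℝ)+d+1)) := by
      apply Finset.sum_congr rfl
      intro j _
      rw [hsum1 j]
    have e3 : (∑ j ∈ Icc (10^(p-2)) (10^(p-1)-1 : ℕ),
        (j:ℝ) * Real.log ((10 * (j:ℝ) + d + 1) / (10 * (j:ℝ) + d)))
        = ∑ j ∈ Icc (10^(p-2)) (10^(p-1)-1 : ℕ),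
          (j:ℝ) * (Real.log (10*(j:ℝ)+d+1) - Real.log (10*(j:ℝ)+d)) := by
      apply Finset.sum_congr rfl
      intro j hj
      rw [hsum2 j hj]
    have e4 : (∑ j ∈ Icc (10^(p-2)) (10^(p-1)-1 : ℕ),
        Real.log ((10 * (j:ℝ) + d + 1) / (10 * (j:ℝ) + d)))
        = ∑ j ∈ Icc (10^(p-2)) (10^(p-1)-1 : ℕ),
          (Real.log (10*(j:ℝ)+d+1) - Real.log (10*(j:ℝ)+d)) := by
      apply Finset.sum_congr rfl
      intro j hj
      rw [hsum2 j hj]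
    rw [e1, e2, e3, e4]
    -- exponent manipulations
    have hps : (10:ℝ)^p = (10:ℝ)^(p-1) * 10 := by
      rw [← pow_succ]
      congr 1
      omega
    have hps2 : (10:ℝ)^(p-1) = (10:ℝ)^(p-2) * 10 := by
      rw [← pow_succ]
      congr 1
      omega
    have c1 : Real.log (10*((10:ℝ)^(p-1) - 1)+d+1) = Real.log ((10:ℝ)^p - 10 + d + 1) := by
      congr 1
      rw [hps]
      ring
    have c2 : Real.log (10*(10:ℝ)^(p-2)+d) = Real.log ((10:ℝ)^(p-1)+d) := by
      congr 1
      rw [hps2]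
      ring
    have h0d : (0:ℝ) ≤ (d:ℝ) := Nat.cast_nonneg d
    have hppos : (0:ℝ) < (10:ℝ)^p := by positivity
    have hpbig : (100:ℝ) ≤ (10:ℝ)^p := by
      calc (100:ℝ) = 10^2 := by norm_num
      _ ≤ 10^p := pow_le_pow_right₀ (by norm_num) hp
    have c3 : Real.log (((10:ℝ)^(p-1)+d)/(10:ℝ)^(p-1))
        = Real.log ((10:ℝ)^(p-1)+d) - Real.log ((10:ℝ)^(p-1)) := by
      rw [Real.log_div (by positivity) (by positivity)]
    have c4 : Real.log ((10:ℝ)^p/((10:ℝ)^p - 10 + d + 1))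
        = Real.log ((10:ℝ)^p) - Real.log ((10:ℝ)^p - 10 + d + 1) := by
      rw [Real.log_div (by positivity) (by nlinarith)]
    have c5 : Real.log ((10:ℝ)^p) = (p:ℝ) * Real.log 10 := by
      rw [Real.log_pow]
    have c6 : Real.log ((10:ℝ)^(p-1)) = ((p:ℝ) - 1) * Real.log 10 := by
      rw [Real.log_pow]
      congr 1
      have : (1:ℕ) ≤ p := by omega
      push_cast [Nat.cast_sub this]
      ring
    have htel := telescope (p := p) (d := d) hp
    rw [c1, c2] at htel
    rw [c3, c4, c5, c6]
    set A1 := ∑ j ∈ Icc (10^(p-2)) (10^(p-1)-2 : ℕ),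
          (j:ℝ) * (Real.log (10*(j:ℝ)+d+10) - Real.log (10*(j:ℝ)+d+1)) with hA1
    set A2 := ∑ j ∈ Icc (10^(p-2)) (10^(p-1)-2 : ℕ),
          (Real.log (10*(j:ℝ)+d+10) - Real.log (10*(j:ℝ)+d+1)) with hA2
    set A3 := ∑ j ∈ Icc (10^(p-2)) (10^(p-1)-1 : ℕ),
          (j:ℝ) * (Real.log (10*(j:ℝ)+d+1) - Real.log (10*(j:ℝ)+d)) with hA3
    set A4 := ∑ j ∈ Icc (10^(p-2)) (10^(p-1)-1 : ℕ),
          (Real.log (10*(j:ℝ)+d+1) - Real.log (10*(j:ℝ)+d)) with hA4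
    set L10 := Real.log 10 with hL10
    set LX := Real.log ((10:ℝ)^p - 10 + d + 1) with hLX
    set LKd := Real.log ((10:ℝ)^(p-1)+d) with hLKd
    have hW2 : W = (10:ℝ)^(p-1) * LX - (10:ℝ)^(p-2) * LKd
        - (A1 + A2 - 9*A3 - (d:ℝ)*A4) := by linarith [htel]
    rw [hW2, hps2]
    have hK2 : ((10:ℝ)^(p-2)) ≠ 0 := by positivity
    field_simp
    ring
  rw [← hVα]
  exact (tendsto_add_atTop_iff_nat p).mp (key.congr (fun M => by rw [add_comm p M]))
end
end

section
/- Let $p \ge 2$ and $d \in \{0,\dots,9\}$. The sequence $(P_{(d,n,p)})_{n \ge 10^{p-1}}$ does not converge. -/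
open Finset Real Filter

noncomputable section

def cnt (p d a b : ℕ) : ℕ := ((Finset.Ico a b).filter (fun j => pthDigit p j = d)).card

lemma cnt_split (p d a b c : ℕ) (h1 : a ≤ b) (h2 : b ≤ c) :
    cnt p d a c = cnt p d a b + cnt p d b c := by
  unfold cnt
  rw [← Finset.Ico_union_Ico_eq_Ico h1 h2, Finset.filter_union,
    Finset.card_union_of_disjoint]
  exact Finset.disjoint_filter_filter (Finset.Ico_disjoint_Ico_consecutive a b c)

lemma pthDigit_eq (p k j : ℕ) (hp : p ≤ k + 1) (h1 : 10 ^ k ≤ j) (h2 : j < 10 ^ (k + 1)) :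
    pthDigit p j = j / 10 ^ (k + 1 - p) % 10 := by
  unfold pthDigit
  rw [Nat.log_eq_of_pow_le_of_lt_pow h1 h2]

lemma div_eq_on_block (T b j : ℕ) (h1 : b * T ≤ j) (h2 : j < (b + 1) * T) : j / T = b :=
  Nat.div_eq_of_lt_le h1 h2

lemma cntT (d T a b : ℕ) (hab : a ≤ b) :
    ((Finset.Ico (a * T) (b * T)).filter (fun j => j / T % 10 = d)).card
      = T * ((Finset.Ico a b).filter (fun m => m % 10 = d)).card := by
  induction b, hab using Nat.le_induction with
  | base => simp
  | succ b hab ih =>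
    have hbT : a * T ≤ b * T := Nat.mul_le_mul_right _ hab
    have hbT2 : b * T ≤ (b + 1) * T := Nat.mul_le_mul_right _ (by omega)
    rw [← Finset.Ico_union_Ico_eq_Ico hbT hbT2, Finset.filter_union,
      Finset.card_union_of_disjoint
        (Finset.disjoint_filter_filter (Finset.Ico_disjoint_Ico_consecutive _ _ _)), ih]
    have hblock : ((Finset.Ico (b * T) ((b + 1) * T)).filter (fun j => j / T % 10 = d)).card
        = if b % 10 = d then T else 0 := by
      have hdiv : ∀ j ∈ Finset.Ico (b * T) ((b + 1) * T), j / T = b := by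
        intro j hj
        rw [Finset.mem_Ico] at hj
        exact div_eq_on_block T b j hj.1 hj.2
      by_cases hbd : b % 10 = d
      · rw [Finset.filter_true_of_mem (fun j hj => by rw [hdiv j hj]; exact hbd),
          if_pos hbd, Nat.card_Ico]
        ring_nf
        omega
      · rw [Finset.filter_false_of_mem (fun j hj => by rw [hdiv j hj]; exact hbd),
          if_neg hbd, Finset.card_empty]
    rw [hblock]
    have : Finset.Ico a (b+1) = insert b (Finset.Ico a b) := by
      rw [Finset.Ico_add_one_right_eq_Icc, ← Finset.Ico_insert_right hab]
    rw [this, Finset.filter_insert]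
    by_cases hbd : b % 10 = d
    · rw [if_pos hbd, if_pos hbd, Finset.card_insert_of_notMem (by simp)]
      ring
    · rw [if_neg hbd, if_neg hbd]
      ring

lemma mod_count (d c n : ℕ) (hd : d ≤ 9) (hc : c % 10 = 0) :
    ((Finset.Ico c (c + n)).filter (fun m => m % 10 = d)).card
      = n / 10 + (if d < n % 10 then 1 else 0) := by
  induction n with
  | zero => simp
  | succ n ih =>
    have : Finset.Ico c (c + (n+1)) = insert (c + n) (Finset.Ico c (c + n)) := by
      rw [show c + (n+1) = (c+n) + 1 by ring, Finset.Ico_add_one_right_eq_Icc,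
        ← Finset.Ico_insert_right (by omega)]
    rw [this, Finset.filter_insert]
    have hcn : (c + n) % 10 = n % 10 := by omega
    by_cases h : (c + n) % 10 = d
    · rw [if_pos h, Finset.card_insert_of_notMem (by simp), ih]
      have : n % 10 = d := by omega
      split_ifs <;> omega
    · rw [if_neg h, ih]
      have : ¬ n % 10 = d := by omega
      split_ifs <;> omega

lemma ten_pow_mod (m : ℕ) (hm : 1 ≤ m) : (10:ℕ) ^ m % 10 = 0 := by
  have : (10:ℕ) ∣ 10^m := dvd_pow_self 10 (by omega)
  omega

lemma decade_cnt (p d m : ℕ) (hp : 2 ≤ p) (hd : d ≤ 9) (hm : p - 1 ≤ m) :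
    cnt p d (10 ^ m) (10 ^ (m + 1)) = 9 * 10 ^ (m - 1) := by
  have hfc : (Finset.Ico (10^m) (10^(m+1))).filter (fun j => pthDigit p j = d)
      = (Finset.Ico (10^m) (10^(m+1))).filter (fun j => j / 10^(m+1-p) % 10 = d) := by
    apply Finset.filter_congr
    intro j hj
    rw [Finset.mem_Ico] at hj
    rw [pthDigit_eq p m j (by omega) hj.1 hj.2]
  have hT : (10:ℕ)^(p-1) * 10^(m+1-p) = 10^m := by
    rw [← pow_add]; congr 1; omega
  have hT10 : (10:ℕ)^p * 10^(m+1-p) = 10^(m+1) := by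
    rw [← pow_add]; congr 1; omega
  unfold cnt
  rw [hfc, ← hT, ← hT10, cntT d _ _ _ (Nat.pow_le_pow_right (by norm_num) (by omega))]
  have hn : (10:ℕ)^p = 10^(p-1) + 9 * 10^(p-1) := by
    have : (10:ℕ)^p = 10 * 10^(p-1) := by
      rw [← pow_succ']; congr 1; omega
    omega
  rw [hn, mod_count d _ _ hd (ten_pow_mod (p-1) (by omega))]
  have h9 : 9 * 10^(p-1) % 10 = 0 := by
    have := ten_pow_mod (p-1) (by omega); omega
  have h9' : 9 * 10^(p-1) / 10 = 9 * 10^(p-2) := by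
    have : (10:ℕ)^(p-1) = 10 * 10^(p-2) := by
      rw [← pow_succ']; congr 1; omega
    rw [this]; omega
  rw [h9', h9]
  have : (10:ℕ)^(m+1-p) * 10^(p-2) = 10^(m-1) := by
    rw [← pow_add]; congr 1; omega
  simp only [if_neg (by omega : ¬ d < 0)]
  calc 10^(m+1-p) * (9 * 10^(p-2) + 0) = 9 * (10^(m+1-p) * 10^(p-2)) := by ring
    _ = 9 * 10^(m-1) := by rw [this]

lemma cnt_upto (p d k : ℕ) (hp : 2 ≤ p) (hd : d ≤ 9) (hk : p - 1 ≤ k) :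
    cnt p d (10 ^ (p-1)) (10 ^ k) = 10 ^ (k-1) - 10 ^ (p-2) := by
  induction k, hk using Nat.le_induction with
  | base =>
    have : cnt p d (10^(p-1)) (10^(p-1)) = 0 := by
      unfold cnt; simp
    rw [this]
    have : (10:ℕ)^(p-1-1) = 10^(p-2) := by congr 1
    omega
  | succ k hk ih =>
    rw [cnt_split p d _ (10^k) _ (Nat.pow_le_pow_right (by norm_num) (by omega))
      (Nat.pow_le_pow_right (by norm_num) (by omega)), ih,
      decade_cnt p d k hp hd hk]
    have h1 : (10:ℕ)^k = 10 * 10^(k-1) := by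
      rw [← pow_succ']; congr 1; omega
    have h2 : (10:ℕ)^(p-2) ≤ 10^(k-1) := Nat.pow_le_pow_right (by norm_num) (by omega)
    have h3 : (10:ℕ)^(k+1-1) = 10^k := by norm_num
    omega

section anchor
variable (p d k : ℕ) (hp : 2 ≤ p) (hd : d ≤ 9) (hk : 2 * p ≤ k)

lemma pow_le_pow10 {a b : ℕ} (h : a ≤ b) : (10:ℕ)^a ≤ 10^b :=
  Nat.pow_le_pow_right (by norm_num) h

include hp hd hk

lemma cnt_partial :
    cnt p d (10 ^ k) (10 ^ k + (d+1) * 10 ^ (k+1-p)) = 10 ^ (k+1-p) := by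
  set T := (10:ℕ)^(k+1-p) with hT
  clear_value T
  have hT1 : 1 ≤ T := by rw [hT]; exact Nat.one_le_pow _ _ (by norm_num)
  have hdTn1 : 1 ≤ (d + 1) * T := by
    calc 1 = 1 * 1 := rfl
    _ ≤ (d + 1) * T := Nat.mul_le_mul (by omega) hT1
  have h10T : 10 * T ≤ 10 ^ k := by
    calc 10 * T = 10^(k+2-p) := by rw [hT, ← pow_succ']; congr 1; omega
    _ ≤ 10^k := pow_le_pow10 (by omega)
  have hsub : 10^k + (d+1) * T < 10^(k+1) := by
    have : (10:ℕ)^(k+1) = 10 * 10^k := by rw [← pow_succ']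
    have hd1 : (d+1) * T ≤ 10 * T := by
      apply Nat.mul_le_mul_right; omega
    omega
  have hfc : (Finset.Ico (10^k) (10^k + (d+1)*T)).filter (fun j => pthDigit p j = d)
      = (Finset.Ico (10^k) (10^k + (d+1)*T)).filter (fun j => j / T % 10 = d) := by
    apply Finset.filter_congr
    intro j hj
    rw [Finset.mem_Ico] at hj
    rw [pthDigit_eq p k j (by omega) hj.1 (by omega), ← hT]
  have hA : (10:ℕ)^(p-1) * T = 10^k := by
    rw [hT, ← pow_add]; congr 1; omega
  have hB : (10^(p-1) + (d+1)) * T = 10^k + (d+1)*T := by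
    rw [add_mul, hA]
  unfold cnt
  rw [hfc, ← hB, ← hA, cntT d T _ _ (by omega)]
  rw [mod_count d _ _ hd (ten_pow_mod (p-1) (by omega))]
  rcases Nat.lt_or_ge d 9 with h9 | h9
  · rw [Nat.div_eq_of_lt (by omega), Nat.mod_eq_of_lt (by omega), if_pos (by omega)]
    ring
  · have hd9 : d = 9 := by omega
    subst hd9
    norm_num

lemma run_not_d (j : ℕ) (hj1 : 10 ^ k + (d+1) * 10 ^ (k+1-p) ≤ j)
    (hj2 : j < 10 ^ k + (d+1) * 10 ^ (k+1-p) + 9 * 10 ^ (k+1-p)) :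
    pthDigit p j ≠ d := by
  set T := (10:ℕ)^(k+1-p) with hT
  clear_value T
  have hT1 : 1 ≤ T := by rw [hT]; exact Nat.one_le_pow _ _ (by norm_num)
  have hdTn1 : 1 ≤ (d + 1) * T := by
    calc 1 = 1 * 1 := rfl
    _ ≤ (d + 1) * T := Nat.mul_le_mul (by omega) hT1
  have h10T : 10 * T ≤ 10 ^ k := by
    calc 10 * T = 10^(k+2-p) := by rw [hT, ← pow_succ']; congr 1; omega
    _ ≤ 10^k := pow_le_pow10 (by omega)
  have hjlt : j < 10^(k+1) := by
    have h1 : (10:ℕ)^(k+1) = 10 * 10^k := by rw [← pow_succ']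
    have h2 : (d+1)*T ≤ 10*T := Nat.mul_le_mul_right _ (by omega)
    omega
  have hjge : 10^k ≤ j := le_trans (Nat.le_add_right _ _) hj1
  rw [pthDigit_eq p k j (by omega) hjge hjlt, ← hT]
  have hA : (10:ℕ)^(p-1) * T = 10^k := by
    rw [hT, ← pow_add]; congr 1; omega
  set m := j / T with hm
  have hm1 : 10^(p-1) + (d+1) ≤ m := by
    rw [hm]
    rw [Nat.le_div_iff_mul_le (by omega)]
    calc (10^(p-1) + (d+1)) * T = 10^k + (d+1)*T := by rw [add_mul, hA]
    _ ≤ j := hj1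
  have hm2 : m < 10^(p-1) + (d+1) + 9 := by
    rw [hm, Nat.div_lt_iff_lt_mul (by omega)]
    calc j < 10^k + (d+1)*T + 9*T := hj2
    _ = (10^(p-1) + (d+1) + 9) * T := by rw [← hA]; ring
  have hmod : (10:ℕ)^(p-1) % 10 = 0 := ten_pow_mod (p-1) (by omega)
  intro hcon
  omega

lemma count_window (i : ℕ)
    (hi1 : 10 ^ k + (d+1) * 10 ^ (k+1-p) - 1 ≤ i)
    (hi2 : i ≤ 10 ^ k + (d+1) * 10 ^ (k+1-p) + 9 * 10 ^ (k+1-p) - 1) :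
    digitCount p d i = 10^(k-1) - 10^(p-2) + 10^(k+1-p) := by
  set T := (10:ℕ)^(k+1-p) with hT
  clear_value T
  set N0 := 10^k + (d+1)*T with hN0
  clear_value N0
  have hT1 : 1 ≤ T := by rw [hT]; exact Nat.one_le_pow _ _ (by norm_num)
  have hdTn1 : 1 ≤ (d + 1) * T := by
    calc 1 = 1 * 1 := rfl
    _ ≤ (d + 1) * T := Nat.mul_le_mul (by omega) hT1
  have hpow : (1:ℕ) ≤ 10^k := Nat.one_le_pow _ _ (by norm_num)
  have hicc : Finset.Icc (10^(p-1)) i = Finset.Ico (10^(p-1)) (i+1) := by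
    rw [Finset.Ico_add_one_right_eq_Icc]
  have hdc : digitCount p d i = cnt p d (10^(p-1)) (i+1) := by
    unfold digitCount cnt
    rw [hicc]
  rw [hdc, cnt_split p d _ N0 _ (by
      calc (10:ℕ)^(p-1) ≤ 10^k := pow_le_pow10 (by omega)
      _ ≤ N0 := by omega) (by omega)]
  have hzero : cnt p d N0 (i+1) = 0 := by
    unfold cnt
    rw [Finset.filter_false_of_mem, Finset.card_empty]
    intro j hj
    rw [Finset.mem_Ico] at hj
    refine run_not_d p d k hp hd hk j ?_ ?_ <;> rw [← hT] <;> rw [← hN0] <;> omega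
  rw [hzero, cnt_split p d _ (10^k) _ (pow_le_pow10 (by omega)) (by omega),
    cnt_upto p d k hp hd (by omega), hN0, hT, cnt_partial p d k hp hd hk]
  omega

end anchor

set_option maxHeartbeats 1000000 in
theorem stmt13 (p d : ℕ) (hp : 2 ≤ p) (hd : d ≤ 9) :
    ¬ ∃ L : ℝ, Filter.Tendsto (fun n => Pdig p d n) Filter.atTop (nhds L) := by
  rintro ⟨L, hL⟩
  set ε : ℝ := 1 / (8 * 10 ^ p * 10 ^ p) with hε
  have hεpos : 0 < ε := by positivity
  rw [Metric.tendsto_atTop] at hL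
  obtain ⟨N, hN⟩ := hL ε hεpos
  set k := max (2 * p) N with hkdef
  have hk : 2 * p ≤ k := le_max_left _ _
  have hkN : N ≤ k := le_max_right _ _
  -- natural number quantities
  set T : ℕ := 10 ^ (k + 1 - p) with hT
  set N0 : ℕ := 10 ^ k + (d + 1) * T with hN0
  set C0 : ℕ := 10 ^ (k - 1) - 10 ^ (p - 2) + T with hC0
  clear_value T N0 C0
  have hT1 : 1 ≤ T := by rw [hT]; exact Nat.one_le_pow _ _ (by norm_num)
  have hdTn1 : 1 ≤ (d + 1) * T := by
    calc 1 = 1 * 1 := rfl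
    _ ≤ (d + 1) * T := Nat.mul_le_mul (by omega) hT1
  have h10T : 10 * T ≤ 10 ^ k := by
    calc 10 * T = 10 ^ (k + 2 - p) := by rw [hT, ← pow_succ']; congr 1; omega
    _ ≤ 10 ^ k := pow_le_pow10 (by omega)
  have hXpos : (1:ℕ) ≤ 10 ^ k := Nat.one_le_pow _ _ (by norm_num)
  have hBk : (10:ℕ) ^ (p - 1) ≤ 10 ^ k := pow_le_pow10 (by omega)
  have hkk : k < 10 ^ k := Nat.lt_pow_self (by norm_num)
  -- the four sample points
  set a1 : ℕ := N0 - 1 with ha1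
  set a2 : ℕ := N0 + T - 1 with ha2
  set a3 : ℕ := N0 + 8 * T - 1 with ha3
  set a4 : ℕ := N0 + 9 * T - 1 with ha4
  clear_value a1 a2 a3 a4
  -- window count values
  have hw : ∀ i : ℕ, N0 - 1 ≤ i → i ≤ N0 + 9 * T - 1 → digitCount p d i = C0 := by
    intro i h1 h2
    rw [hC0, hT]
    exact count_window p d k hp hd hk i (by rw [← hT, ← hN0]; omega) (by rw [← hT, ← hN0]; omega)
  -- real abbreviations
  set B : ℝ := (10:ℝ) ^ (p - 1) with hB
  set X : ℝ := (10:ℝ) ^ k with hX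
  set u : ℝ := (10:ℝ) ^ p with hu
  set Tr : ℝ := (T : ℝ) with hTr
  set N0r : ℝ := (N0 : ℝ) with hN0r
  set C0r : ℝ := (C0 : ℝ) with hC0r
  have hBX : B ≤ X := by rw [hB, hX]; exact_mod_cast hBk
  have hB1 : (1:ℝ) ≤ B := by rw [hB]; apply one_le_pow₀; norm_num
  have hTr1 : (1:ℝ) ≤ Tr := by rw [hTr]; exact_mod_cast hT1
  have hTrX : 10 * Tr ≤ X := by rw [hTr, hX]; exact_mod_cast h10T
  have hN0X : N0r = X + (d + 1) * Tr := by rw [hN0r, hN0, hX, hTr]; push_cast; ring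
  have hd9 : ((d:ℝ)) ≤ 9 := by exact_mod_cast hd
  have hdpos : (0:ℝ) ≤ (d:ℝ) := by positivity
  have hXpos' : (0:ℝ) < X := by rw [hX]; positivity
  have hupos : (0:ℝ) < u := by rw [hu]; positivity
  have hTu : Tr * u = 10 * X := by
    rw [hTr, hu, hX, hT]
    have : (10:ℕ) ^ (k + 1 - p) * 10 ^ p = 10 * 10 ^ k := by
      rw [← pow_add, ← pow_succ']; congr 1; omega
    exact_mod_cast this
  have hC0X : X ≤ 20 * C0r := by
    rw [hC0r, hX]
    have h1 : 2 * 10 ^ (p - 2) ≤ 10 ^ (p - 1) := by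
      have : (10:ℕ) ^ (p - 1) = 10 * 10 ^ (p - 2) := by rw [← pow_succ']; congr 1; omega
      omega
    have h2 : (10:ℕ) ^ (p - 1) ≤ 10 ^ (k - 1) := pow_le_pow10 (by omega)
    have h3 : (10:ℕ) ^ k = 10 * 10 ^ (k - 1) := by rw [← pow_succ']; congr 1; omega
    have : (10:ℕ) ^ k ≤ 20 * C0 := by rw [hC0]; omega
    exact_mod_cast this
  have hC0pos : (0:ℝ) ≤ C0r := by rw [hC0r]; positivity
  -- A-values
  have hTrnn : (0:ℝ) ≤ Tr := by linarith
  have hdTnn : (0:ℝ) ≤ ((d:ℝ) + 1) * Tr := by positivity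
  have hdTle : ((d:ℝ) + 1) * Tr ≤ X := by
    have h1 : ((d:ℝ) + 1) * Tr ≤ 10 * Tr :=
      mul_le_mul_of_nonneg_right (by linarith) hTrnn
    linarith
  have hdT1 : (1:ℝ) ≤ ((d:ℝ) + 1) * Tr := by nlinarith
  set A1 : ℝ := N0r - B with hA1
  set A2 : ℝ := N0r + Tr - B with hA2
  set A3 : ℝ := N0r + 8 * Tr - B with hA3
  set A4 : ℝ := N0r + 9 * Tr - B with hA4
  clear_value A1 A2 A3 A4
  have hA1pos : (0:ℝ) < A1 := by rw [hA1, hN0X]; linarith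
  have hA2pos : (0:ℝ) < A2 := by rw [hA2, hN0X]; linarith
  have hA3pos : (0:ℝ) < A3 := by rw [hA3, hN0X]; linarith
  have hA4pos : (0:ℝ) < A4 := by rw [hA4, hN0X]; linarith
  have hA4X : A4 ≤ 3 * X := by rw [hA4, hN0X]; linarith
  have hA2X : A2 ≤ 3 * X := by rw [hA2, hN0X]; linarith
  have hA3X : A3 ≤ 3 * X := by rw [hA3, hN0X]; linarith
  -- cast identities for sample points
  have hN01 : 1 ≤ N0 := by omega
  have e1 : ((a1:ℕ):ℝ) + 1 = N0r := by
    rw [hN0r]; exact_mod_cast (show a1 + 1 = N0 by omega)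
  have e2 : ((a2:ℕ):ℝ) + 1 = N0r + Tr := by
    rw [hN0r, hTr]; exact_mod_cast (show a2 + 1 = N0 + T by omega)
  have e3 : ((a3:ℕ):ℝ) + 1 = N0r + 8 * Tr := by
    rw [hN0r, hTr]; exact_mod_cast (show a3 + 1 = N0 + 8 * T by omega)
  have e4 : ((a4:ℕ):ℝ) + 1 = N0r + 9 * Tr := by
    rw [hN0r, hTr]; exact_mod_cast (show a4 + 1 = N0 + 9 * T by omega)
  -- partial sums
  set S : ℕ → ℝ := fun n =>
    ∑ i ∈ Finset.Icc (10 ^ (p - 1)) n, (digitCount p d i : ℝ) / ((i : ℝ) + 1 - B) with hSdef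
  have hPdig : ∀ n : ℕ, Pdig p d n = (1 / ((n : ℝ) + 1 - B)) * S n := fun n => rfl
  clear_value S B X u Tr N0r C0r
  have hBN0 : 10 ^ (p - 1) + 1 ≤ N0 := by
    have := hBk; omega
  -- splitting identities
  have hS2 : S a2 = S a1 + ∑ i ∈ Finset.Ico N0 (N0 + T),
      (digitCount p d i : ℝ) / ((i : ℝ) + 1 - B) := by
    rw [hSdef]
    simp only
    rw [show Finset.Icc (10 ^ (p - 1)) a2 = Finset.Icc (10 ^ (p - 1)) a1 ∪ Finset.Ico N0 (N0 + T) by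
      ext x; simp only [Finset.mem_Icc, Finset.mem_union, Finset.mem_Ico]; omega]
    rw [Finset.sum_union (by
      rw [Finset.disjoint_left]
      intro x hx hx2
      simp only [Finset.mem_Icc] at hx
      simp only [Finset.mem_Ico] at hx2
      omega)]
  have hS4 : S a4 = S a3 + ∑ i ∈ Finset.Ico (N0 + 8 * T) (N0 + 9 * T),
      (digitCount p d i : ℝ) / ((i : ℝ) + 1 - B) := by
    rw [hSdef]
    simp only
    rw [show Finset.Icc (10 ^ (p - 1)) a4
        = Finset.Icc (10 ^ (p - 1)) a3 ∪ Finset.Ico (N0 + 8 * T) (N0 + 9 * T) by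
      ext x; simp only [Finset.mem_Icc, Finset.mem_union, Finset.mem_Ico]; omega]
    rw [Finset.sum_union (by
      rw [Finset.disjoint_left]
      intro x hx hx2
      simp only [Finset.mem_Icc] at hx
      simp only [Finset.mem_Ico] at hx2
      omega)]
  -- sum bounds
  have hsum1 : Tr * (C0r / A2) ≤ ∑ i ∈ Finset.Ico N0 (N0 + T),
      (digitCount p d i : ℝ) / ((i : ℝ) + 1 - B) := by
    have hb : ∀ i ∈ Finset.Ico N0 (N0 + T),
        C0r / A2 ≤ (digitCount p d i : ℝ) / ((i : ℝ) + 1 - B) := by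
      intro i hi
      rw [Finset.mem_Ico] at hi
      rw [hw i (by omega) (by omega), ← hC0r]
      have hiN : N0r ≤ (i : ℝ) := by rw [hN0r]; exact_mod_cast hi.1
      have hi2 : (i : ℝ) + 1 ≤ N0r + Tr := by
        rw [hN0r, hTr]; exact_mod_cast (show i + 1 ≤ N0 + T by omega)
      have hip : (0:ℝ) < (i : ℝ) + 1 - B := by
        have := hA1pos; rw [hA1] at this; linarith
      have hile : (i : ℝ) + 1 - B ≤ A2 := by rw [hA2]; linarith
      gcongr
    have := Finset.card_nsmul_le_sum (Finset.Ico N0 (N0 + T)) _ _ hb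
    rw [Nat.card_Ico, show N0 + T - N0 = T by omega, nsmul_eq_mul, ← hTr] at this
    exact this
  have hsum2 : (∑ i ∈ Finset.Ico (N0 + 8 * T) (N0 + 9 * T),
      (digitCount p d i : ℝ) / ((i : ℝ) + 1 - B)) ≤ Tr * (C0r / A3) := by
    have hb : ∀ i ∈ Finset.Ico (N0 + 8 * T) (N0 + 9 * T),
        (digitCount p d i : ℝ) / ((i : ℝ) + 1 - B) ≤ C0r / A3 := by
      intro i hi
      rw [Finset.mem_Ico] at hi
      rw [hw i (by omega) (by omega), ← hC0r]
      have hiN : N0r + 8 * Tr ≤ (i : ℝ) := by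
        rw [hN0r, hTr]; exact_mod_cast (show N0 + 8 * T ≤ i by omega)
      have hA3pos' := hA3pos
      rw [hA3] at hA3pos'
      have hile : A3 ≤ (i : ℝ) + 1 - B := by rw [hA3]; linarith
      gcongr
    have := Finset.sum_le_card_nsmul (Finset.Ico (N0 + 8 * T) (N0 + 9 * T)) _ _ hb
    rw [Nat.card_Ico, show N0 + 9 * T - (N0 + 8 * T) = T by omega, nsmul_eq_mul, ← hTr] at this
    exact this
  -- S in terms of Pdig
  have hSP : ∀ n : ℕ, 10 ^ (p - 1) ≤ n → S n = ((n : ℝ) + 1 - B) * Pdig p d n := by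
    intro n hn
    have hpos : (0:ℝ) < (n : ℝ) + 1 - B := by
      have h1 : ((10 ^ (p - 1) : ℕ) : ℝ) ≤ (n : ℝ) := Nat.cast_le.mpr hn
      have h2 : ((10 ^ (p - 1) : ℕ) : ℝ) = B := by rw [hB]; push_cast; ring
      linarith
    rw [hPdig n]
    field_simp
  -- the four sample values are close to L
  have hclose : ∀ j : ℕ, N ≤ j → |Pdig p d j - L| < ε := by
    intro j hj
    have := hN j hj
    rwa [Real.dist_eq] at this
  have hP1 := hclose a1 (by omega)
  have hP2 := hclose a2 (by omega)
  have hP3 := hclose a3 (by omega)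
  have hP4 := hclose a4 (by omega)
  -- S at sample points in terms of Pdig
  have hSa1 : S a1 = A1 * Pdig p d a1 := by
    rw [hSP a1 (by omega)]; congr 1; rw [hA1, ← e1]
  have hSa2 : S a2 = A2 * Pdig p d a2 := by
    rw [hSP a2 (by omega)]; congr 1; rw [hA2, ← e2]
  have hSa3 : S a3 = A3 * Pdig p d a3 := by
    rw [hSP a3 (by omega)]; congr 1; rw [hA3, ← e3]
  have hSa4 : S a4 = A4 * Pdig p d a4 := by
    rw [hSP a4 (by omega)]; congr 1; rw [hA4, ← e4]
  -- key inequalities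
  have I1 : Tr * (C0r / A2) ≤ A2 * Pdig p d a2 - A1 * Pdig p d a1 := by
    rw [← hSa1, ← hSa2]; linarith [hsum1, hS2]
  have I2 : A4 * Pdig p d a4 - A3 * Pdig p d a3 ≤ Tr * (C0r / A3) := by
    rw [← hSa3, ← hSa4]; linarith [hsum2, hS4]
  obtain ⟨hP1a, hP1b⟩ := abs_lt.mp hP1
  obtain ⟨hP2a, hP2b⟩ := abs_lt.mp hP2
  obtain ⟨hP3a, hP3b⟩ := abs_lt.mp hP3
  obtain ⟨hP4a, hP4b⟩ := abs_lt.mp hP4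
  have m2 : A2 * Pdig p d a2 ≤ A2 * L + A2 * ε := by
    have h := mul_le_mul_of_nonneg_left (le_of_lt hP2b) hA2pos.le
    rw [mul_sub] at h; linarith
  have m1 : A1 * L - A1 * ε ≤ A1 * Pdig p d a1 := by
    have h := mul_le_mul_of_nonneg_left (show L - Pdig p d a1 ≤ ε by linarith) hA1pos.le
    rw [mul_sub] at h; linarith
  have m3 : A3 * Pdig p d a3 ≤ A3 * L + A3 * ε := by
    have h := mul_le_mul_of_nonneg_left (le_of_lt hP3b) hA3pos.le
    rw [mul_sub] at h; linarith
  have m4 : A4 * L - A4 * ε ≤ A4 * Pdig p d a4 := by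
    have h := mul_le_mul_of_nonneg_left (show L - Pdig p d a4 ≤ ε by linarith) hA4pos.le
    rw [mul_sub] at h; linarith
  have hA21 : A2 * L = A1 * L + Tr * L := by rw [hA1, hA2]; ring
  have hA43 : A4 * L = A3 * L + Tr * L := by rw [hA3, hA4]; ring
  have key : Tr * (C0r / A2) - Tr * (C0r / A3) ≤ A1 * ε + A2 * ε + A3 * ε + A4 * ε := by
    linarith [I1, I2, m1, m2, m3, m4, hA21, hA43]
  have hA1X : A1 ≤ 3 * X := by rw [hA1, hN0X]; linarith
  have keyX : Tr * (C0r / A2) - Tr * (C0r / A3) ≤ 12 * (ε * X) := by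
    have b1 : A1 * ε ≤ 3 * X * ε := mul_le_mul_of_nonneg_right hA1X hεpos.le
    have b2 : A2 * ε ≤ 3 * X * ε := mul_le_mul_of_nonneg_right hA2X hεpos.le
    have b3 : A3 * ε ≤ 3 * X * ε := mul_le_mul_of_nonneg_right hA3X hεpos.le
    have b4 : A4 * ε ≤ 3 * X * ε := mul_le_mul_of_nonneg_right hA4X hεpos.le
    have : 3 * X * ε + 3 * X * ε + 3 * X * ε + 3 * X * ε = 12 * (ε * X) := by ring
    linarith [key, b1, b2, b3, b4]
  -- lower bound on the gap
  have hdiff : C0r / A2 - C0r / A3 = (C0r * (7 * Tr)) / (A2 * A3) := by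
    rw [div_sub_div _ _ (ne_of_gt hA2pos) (ne_of_gt hA3pos)]
    congr 1
    rw [hA2, hA3]; ring
  have hden : A2 * A3 ≤ 9 * (X * X) := by
    calc A2 * A3 ≤ (3 * X) * (3 * X) :=
      mul_le_mul hA2X hA3X hA3pos.le (by positivity)
    _ = 9 * (X * X) := by ring
  have hgap1 : (C0r * (7 * Tr)) / (9 * (X * X)) ≤ (C0r * (7 * Tr)) / (A2 * A3) := by
    gcongr
    all_goals first
      | exact mul_nonneg hC0pos (by positivity)
      | exact mul_pos hA2pos hA3pos
      | exact hden
      | positivity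
  have hgap2 : ((X / 20) * (7 * Tr)) / (9 * (X * X)) ≤ (C0r * (7 * Tr)) / (9 * (X * X)) := by
    gcongr
    · linarith
  have hgap3 : ((X / 20) * (7 * Tr)) / (9 * (X * X)) = 7 * Tr / (180 * X) := by
    field_simp
    ring
  have hgap4 : Tr / (30 * X) ≤ 7 * Tr / (180 * X) := by
    rw [div_le_div_iff₀ (by positivity) (by positivity)]
    have h0 : 0 ≤ Tr * X := mul_nonneg hTrnn hXpos'.le
    calc Tr * (180 * X) = 180 * (Tr * X) := by ring
    _ ≤ 210 * (Tr * X) := by linarith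
    _ = 7 * Tr * (30 * X) := by ring
  have hgap : Tr / (30 * X) ≤ C0r / A2 - C0r / A3 := by
    rw [hdiff]
    calc Tr / (30 * X) ≤ 7 * Tr / (180 * X) := hgap4
    _ = ((X / 20) * (7 * Tr)) / (9 * (X * X)) := hgap3.symm
    _ ≤ (C0r * (7 * Tr)) / (9 * (X * X)) := hgap2
    _ ≤ (C0r * (7 * Tr)) / (A2 * A3) := hgap1
  -- final contradiction
  have hfin : Tr * (Tr / (30 * X)) ≤ 12 * (ε * X) := by
    have := mul_le_mul_of_nonneg_left hgap hTrnn
    have hrw : Tr * (C0r / A2 - C0r / A3) = Tr * (C0r / A2) - Tr * (C0r / A3) := by ring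
    linarith [keyX, this, hrw.le, hrw.ge]
  have hfin2 : Tr * Tr ≤ 12 * (ε * X) * (30 * X) := by
    have h30X : (0:ℝ) < 30 * X := by positivity
    rw [mul_div_assoc'] at hfin
    calc Tr * Tr = Tr * Tr / (30 * X) * (30 * X) := by field_simp
    _ ≤ 12 * (ε * X) * (30 * X) := mul_le_mul_of_nonneg_right hfin h30X.le
  have hε8 : ε * (8 * (u * u)) = 1 := by
    rw [hε, hu]
    field_simp
  have H := mul_le_mul_of_nonneg_right hfin2 (show (0:ℝ) ≤ 8 * (u * u) by positivity)
  have e2' : 12 * (ε * X) * (30 * X) * (8 * (u * u)) = 360 * (X * X) * (ε * (8 * (u * u))) := by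
    ring
  have e2 : 12 * (ε * X) * (30 * X) * (8 * (u * u)) = 360 * (X * X) := by
    rw [e2', hε8, mul_one]
  have e3 : Tr * Tr * (8 * (u * u)) = 800 * (X * X) := by
    calc Tr * Tr * (8 * (u * u)) = 8 * ((Tr * u) * (Tr * u)) := by ring
    _ = 8 * ((10 * X) * (10 * X)) := by rw [hTu]
    _ = 800 * (X * X) := by ring
  have hXX : (0:ℝ) < X * X := mul_pos hXpos' hXpos'
  linarith [H, e2, e3, hXX]
end
end

section
/- Let $p \ge 2$, $d \in \{0,\dots,9\}$, and $q \ge 1$ with $N = q + 10^{p-1} - 1$ having $p$-th digit different from $d$. Writing $10^{p+k_q} \le N < 10^{p+k_q+1}$ with $k_q \ge -1$ and letting $t$ be the number of full blocks $[(10j+d)10^{k_q+1},(10j+d+1)10^{k_q+1}-1]$, $j \ge 10^{p-2}$, contained in $[10^{p+k_q}, N]$, the probability that a uniformly random integer in $[10^{p-1}, N]$ has $p$-th digit $d$ equals $\frac{10^{k_q+1}(10^{p-2}+t) - 10^{p-2}}{q}$. -/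
open Finset Real Filter

noncomputable section

/-- If `m` lies in the block determined by prefix `10*j+d` and trailing length `e`,
then its `p`-th digit is `d`, and `e`, `j` are determined by `m`. -/
lemma block_data (p d m e j : ℕ) (hp : 2 ≤ p) (hd : d ≤ 9)
    (h1 : 10 ^ (p - 2) ≤ j) (h2 : j < 10 ^ (p - 1))
    (h3 : (10 * j + d) * 10 ^ e ≤ m) (h4 : m < (10 * j + d + 1) * 10 ^ e) :
    pthDigit p m = d ∧ e = Nat.log 10 m + 1 - p ∧ j = m / 10 ^ (e + 1) := by
  obtain ⟨a, rfl⟩ := Nat.exists_eq_add_of_le hp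
  simp only [show 2 + a - 1 = a + 1 by omega, show 2 + a - 2 = a by omega] at *
  have hlow : 10 ^ (a + 1 + e) ≤ m := by
    calc 10 ^ (a + 1 + e) = (10 * 10 ^ a) * 10 ^ e := by ring
    _ ≤ (10 * j + d) * 10 ^ e := Nat.mul_le_mul_right _ (by omega)
    _ ≤ m := h3
  have hhigh : m < 10 ^ (a + 1 + e + 1) := by
    calc m < (10 * j + d + 1) * 10 ^ e := h4
    _ ≤ (10 * 10 ^ (a + 1)) * 10 ^ e := Nat.mul_le_mul_right _ (by omega)
    _ = 10 ^ (a + 1 + e + 1) := by ring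
  have hlog : Nat.log 10 m = a + 1 + e := Nat.log_eq_of_pow_le_of_lt_pow hlow hhigh
  have hdiv : m / 10 ^ e = 10 * j + d := Nat.div_eq_of_lt_le h3 h4
  have hdiv2 : m / 10 ^ (e + 1) = j := by
    rw [pow_succ, ← Nat.div_div_eq_div_mul, hdiv,
      Nat.mul_add_div (by norm_num), Nat.div_eq_of_lt (by omega)]
    omega
  refine ⟨?_, by omega, hdiv2.symm⟩
  unfold pthDigit
  rw [hlog, show a + 1 + e + 1 - (2 + a) = e by omega, hdiv, Nat.mul_add_mod,
    Nat.mod_eq_of_lt (by omega)]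

/-- Conversely, every `m ≥ 10^(p-1)` with `p`-th digit `d` lies in such a block. -/
lemma exists_block (p d m : ℕ) (hp : 2 ≤ p) (hm : 10 ^ (p - 1) ≤ m)
    (hdig : pthDigit p m = d) :
    ∃ e j, 10 ^ (p - 2) ≤ j ∧ j < 10 ^ (p - 1) ∧
      (10 * j + d) * 10 ^ e ≤ m ∧ m < (10 * j + d + 1) * 10 ^ e := by
  obtain ⟨a, rfl⟩ := Nat.exists_eq_add_of_le hp
  simp only [show 2 + a - 1 = a + 1 by omega, show 2 + a - 2 = a by omega] at *
  have hm0 : m ≠ 0 := by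
    have : 0 < 10 ^ (a + 1) := Nat.pow_pos (by norm_num)
    omega
  have hL1 : 10 ^ Nat.log 10 m ≤ m := Nat.pow_log_le_self 10 hm0
  have hL2 : m < 10 ^ (Nat.log 10 m + 1) := Nat.lt_pow_succ_log_self (by norm_num) m
  set L := Nat.log 10 m with hLdef
  have hpL : a + 1 ≤ L := by
    by_contra h
    push_neg at h
    have : m < 10 ^ (a + 1) :=
      lt_of_lt_of_le hL2 (Nat.pow_le_pow_right (by norm_num) (by omega))
    omega
  set e := L - (a + 1) with he
  have hLe : L = a + 1 + e := by omega
  set j := m / 10 ^ (e + 1) with hj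
  have hEpos : 0 < (10 : ℕ) ^ e := Nat.pow_pos (by norm_num)
  have hE1pos : 0 < (10 : ℕ) ^ (e + 1) := Nat.pow_pos (by norm_num)
  have hdm : m / 10 ^ e = 10 * j + d := by
    have hsplit := Nat.div_add_mod (m / 10 ^ e) 10
    have hjj : m / 10 ^ e / 10 = j := by
      rw [Nat.div_div_eq_div_mul, ← pow_succ]
    have hmod : m / 10 ^ e % 10 = d := by
      rw [← hdig]
      unfold pthDigit
      rw [← hLdef, show L + 1 - (2 + a) = e by omega]
    omega
  refine ⟨e, j, ?_, ?_, ?_, ?_⟩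
  · rw [hj, Nat.le_div_iff_mul_le hE1pos]
    calc 10 ^ a * 10 ^ (e + 1) = 10 ^ (a + 1 + e) := by ring
    _ = 10 ^ L := by rw [hLe]
    _ ≤ m := hL1
  · rw [hj, Nat.div_lt_iff_lt_mul hE1pos]
    calc m < 10 ^ (L + 1) := hL2
    _ = 10 ^ (a + 1) * 10 ^ (e + 1) := by rw [hLe]; ring
  · calc (10 * j + d) * 10 ^ e = m / 10 ^ e * 10 ^ e := by rw [hdm]
    _ ≤ m := Nat.div_mul_le_self _ _
  · have h1 := Nat.div_add_mod m (10 ^ e)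
    have h2 : m % 10 ^ e < 10 ^ e := Nat.mod_lt _ hEpos
    calc m = 10 ^ e * (m / 10 ^ e) + m % 10 ^ e := h1.symm
    _ < 10 ^ e * (m / 10 ^ e) + 10 ^ e := by omega
    _ = (10 * j + d + 1) * 10 ^ e := by rw [hdm]; ring

lemma geom_ten (K : ℕ) : 9 * ∑ e ∈ Finset.range K, (10 : ℕ) ^ e + 1 = 10 ^ K := by
  induction K with
  | zero => simp
  | succ n ih =>
    rw [Finset.sum_range_succ, pow_succ]
    omega

theorem stmt14 (p d q N K : ℕ) (hp : 2 ≤ p) (hd : d ≤ 9) (hq : 1 ≤ q)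
    (hN : N = q + 10 ^ (p - 1) - 1) (hdig : pthDigit p N ≠ d)
    (hK1 : 10 ^ (p + K - 1) ≤ N) (hK2 : N < 10 ^ (p + K)) :
    (digitCount p d N : ℝ) / q =
      ((10 : ℝ) ^ K * (10 ^ (p - 2) +
        (((Finset.Icc (10 ^ (p - 2)) (10 ^ (p - 1) - 1)).filter
          (fun j => 10 ^ (p + K - 1) ≤ (10 * j + d) * 10 ^ K ∧
            (10 * j + d + 1) * 10 ^ K - 1 ≤ N)).card : ℝ)) - 10 ^ (p - 2)) / q := by
  classical
  have hNge : 10 ^ (p - 1) ≤ N :=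
    le_trans (Nat.pow_le_pow_right (by norm_num) (by omega)) hK1
  have hP2pos : 1 ≤ (10 : ℕ) ^ (p - 2) := Nat.one_le_pow _ _ (by norm_num)
  have hP1pos : 1 ≤ (10 : ℕ) ^ (p - 1) := Nat.one_le_pow _ _ (by norm_num)
  have hP21 : (10 : ℕ) ^ (p - 1) = 10 * 10 ^ (p - 2) := by
    rw [show p - 1 = (p - 2) + 1 by omega, pow_succ]; ring
  have hPK : (10 : ℕ) ^ (p + K - 1) = 10 ^ (p - 1) * 10 ^ K := by
    rw [← pow_add]; congr 1; omega
  set S := (Finset.Icc (10 ^ (p - 2)) (10 ^ (p - 1) - 1)).filter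
      (fun j => 10 ^ (p + K - 1) ≤ (10 * j + d) * 10 ^ K ∧
        (10 * j + d + 1) * 10 ^ K - 1 ≤ N) with hSdef
  suffices hmain : digitCount p d N = 10 ^ (p - 2) * (10 ^ K - 1) + 10 ^ K * S.card by
    rw [hmain]
    have h10K : (1 : ℕ) ≤ 10 ^ K := Nat.one_le_pow _ _ (by norm_num)
    congr 1
    rw [Nat.cast_add, Nat.cast_mul, Nat.cast_mul, Nat.cast_sub h10K]
    push_cast
    ring
  -- the decomposition of the filtered set into blocks
  have hkey : (Finset.Icc (10 ^ (p - 1)) N).filter (fun m => pthDigit p m = d)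
      = ((Finset.Icc (10 ^ (p - 2)) (10 ^ (p - 1) - 1)) ×ˢ Finset.range (K + 1)).biUnion
          (fun je => Finset.Icc ((10 * je.1 + d) * 10 ^ je.2)
            ((10 * je.1 + d + 1) * 10 ^ je.2 - 1) ∩ Finset.Icc (10 ^ (p - 1)) N) := by
    ext m
    simp only [Finset.mem_filter, Finset.mem_biUnion, Finset.mem_product, Finset.mem_Icc,
      Finset.mem_range, Finset.mem_inter]
    constructor
    · rintro ⟨⟨hm1, hm2⟩, hdm⟩
      obtain ⟨e, j, hj1, hj2, hb1, hb2⟩ := exists_block p d m hp hm1 hdm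
      have hblow : 10 ^ (p - 1) * 10 ^ e ≤ m := by
        refine le_trans (Nat.mul_le_mul_right _ ?_) hb1
        omega
      have heK : e < K + 1 := by
        have h1 : (10 : ℕ) ^ (p - 1 + e) ≤ N := le_trans (by rw [pow_add]; exact hblow) hm2
        have h2 : (10 : ℕ) ^ (p - 1 + e) < 10 ^ (p + K) := lt_of_le_of_lt h1 hK2
        have h3 : p - 1 + e < p + K := (Nat.pow_lt_pow_iff_right (by norm_num)).mp h2
        omega
      have hpos : 0 < (10 * j + d + 1) * 10 ^ e :=
        Nat.mul_pos (by omega) (Nat.pow_pos (by norm_num))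
      have hb2le : m ≤ (10 * j + d + 1) * 10 ^ e - 1 := by omega
      exact ⟨(j, e), ⟨⟨hj1, by omega⟩, heK⟩, ⟨hb1, hb2le⟩, hm1, hm2⟩
    · rintro ⟨⟨j, e⟩, ⟨⟨hj1, hj2⟩, heK⟩, ⟨hb1, hb2⟩, hm1, hm2⟩
      dsimp only at hj1 hj2 hb1 hb2
      have hpos : 0 < (10 * j + d + 1) * 10 ^ e :=
        Nat.mul_pos (by omega) (Nat.pow_pos (by norm_num))
      have hb2' : m < (10 * j + d + 1) * 10 ^ e := by omega
      exact ⟨⟨hm1, hm2⟩, (block_data p d m e j hp hd hj1 (by omega) hb1 hb2').1⟩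
  have hdisj : ∀ x ∈ (Finset.Icc (10 ^ (p - 2)) (10 ^ (p - 1) - 1)) ×ˢ Finset.range (K + 1),
      ∀ y ∈ (Finset.Icc (10 ^ (p - 2)) (10 ^ (p - 1) - 1)) ×ˢ Finset.range (K + 1), x ≠ y →
      Disjoint
        (Finset.Icc ((10 * x.1 + d) * 10 ^ x.2) ((10 * x.1 + d + 1) * 10 ^ x.2 - 1)
          ∩ Finset.Icc (10 ^ (p - 1)) N)
        (Finset.Icc ((10 * y.1 + d) * 10 ^ y.2) ((10 * y.1 + d + 1) * 10 ^ y.2 - 1)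
          ∩ Finset.Icc (10 ^ (p - 1)) N) := by
    rintro ⟨j, e⟩ hx ⟨j', e'⟩ hy hne
    simp only [Finset.mem_product, Finset.mem_Icc, Finset.mem_range] at hx hy
    rw [Finset.disjoint_left]
    rintro m hmx hmy
    simp only [Finset.mem_inter, Finset.mem_Icc] at hmx hmy
    -- projections already reduced
    have hpos : 0 < (10 * j + d + 1) * 10 ^ e :=
      Nat.mul_pos (by omega) (Nat.pow_pos (by norm_num))
    have hpos' : 0 < (10 * j' + d + 1) * 10 ^ e' :=
      Nat.mul_pos (by omega) (Nat.pow_pos (by norm_num))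
    have h1 := block_data p d m e j hp hd hx.1.1 (by omega) hmx.1.1 (by omega)
    have h2 := block_data p d m e' j' hp hd hy.1.1 (by omega) hmy.1.1 (by omega)
    apply hne
    have he : e = e' := by rw [h1.2.1, h2.2.1]
    have hj : j = j' := by rw [h1.2.2, h2.2.2, he]
    simp [he, hj]
  rw [digitCount, hkey, Finset.card_biUnion hdisj, Finset.sum_product]
  have hinner : ∀ j ∈ Finset.Icc (10 ^ (p - 2)) (10 ^ (p - 1) - 1),
      (∑ e ∈ Finset.range (K + 1),
        (Finset.Icc ((10 * j + d) * 10 ^ e) ((10 * j + d + 1) * 10 ^ e - 1)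
          ∩ Finset.Icc (10 ^ (p - 1)) N).card)
      = (∑ e ∈ Finset.range K, 10 ^ e) +
        (if 10 ^ (p + K - 1) ≤ (10 * j + d) * 10 ^ K ∧
            (10 * j + d + 1) * 10 ^ K - 1 ≤ N then 10 ^ K else 0) := by
    intro j hj
    simp only [Finset.mem_Icc] at hj
    have hjd : 10 ^ (p - 1) ≤ 10 * j + d := by omega
    rw [Finset.sum_range_succ]
    congr 1
    · apply Finset.sum_congr rfl
      intro e he
      simp only [Finset.mem_range] at he
      have hEpos : 0 < (10 : ℕ) ^ e := Nat.pow_pos (by norm_num)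
      have hident : (10 * j + d + 1) * 10 ^ e = (10 * j + d) * 10 ^ e + 10 ^ e := by ring
      have hsub : Finset.Icc ((10 * j + d) * 10 ^ e) ((10 * j + d + 1) * 10 ^ e - 1)
          ⊆ Finset.Icc (10 ^ (p - 1)) N := by
        intro m hm
        simp only [Finset.mem_Icc] at hm ⊢
        constructor
        · calc 10 ^ (p - 1) ≤ 10 ^ (p - 1) * 10 ^ e := Nat.le_mul_of_pos_right _ hEpos
          _ ≤ (10 * j + d) * 10 ^ e := Nat.mul_le_mul_right _ hjd
          _ ≤ m := hm.1
        · have hend : (10 * j + d + 1) * 10 ^ e ≤ 10 ^ (p + K - 1) := by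
            calc (10 * j + d + 1) * 10 ^ e ≤ 10 ^ p * 10 ^ e := by
                  apply Nat.mul_le_mul_right
                  have : (10 : ℕ) ^ p = 10 * 10 ^ (p - 1) := by
                    rw [← pow_succ']; congr 1; omega
                  omega
            _ = 10 ^ (p + e) := by rw [← pow_add]
            _ ≤ 10 ^ (p + K - 1) := Nat.pow_le_pow_right (by norm_num) (by omega)
          have hend2 : (10 * j + d + 1) * 10 ^ e - 1 ≤ N := by
            have := le_trans hend hK1
            omega
          exact le_trans hm.2 hend2
      rw [Finset.inter_eq_left.mpr hsub, Nat.card_Icc]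
      have hpos : 10 ^ e ≤ (10 * j + d) * 10 ^ e := Nat.le_mul_of_pos_left _ (by omega)
      omega
    · have hfirst : 10 ^ (p + K - 1) ≤ (10 * j + d) * 10 ^ K := by
        rw [hPK]
        exact Nat.mul_le_mul_right _ hjd
      have hKpos : 0 < (10 : ℕ) ^ K := Nat.pow_pos (by norm_num)
      have hident : (10 * j + d + 1) * 10 ^ K = (10 * j + d) * 10 ^ K + 10 ^ K := by ring
      by_cases hc : (10 * j + d + 1) * 10 ^ K - 1 ≤ N
      · rw [if_pos ⟨hfirst, hc⟩]
        have hsub : Finset.Icc ((10 * j + d) * 10 ^ K) ((10 * j + d + 1) * 10 ^ K - 1)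
            ⊆ Finset.Icc (10 ^ (p - 1)) N := by
          intro m hm
          simp only [Finset.mem_Icc] at hm ⊢
          refine ⟨?_, le_trans hm.2 hc⟩
          calc 10 ^ (p - 1) ≤ 10 ^ (p + K - 1) :=
                Nat.pow_le_pow_right (by norm_num) (by omega)
          _ ≤ (10 * j + d) * 10 ^ K := hfirst
          _ ≤ m := hm.1
        rw [Finset.inter_eq_left.mpr hsub, Nat.card_Icc]
        have hpos : 10 ^ K ≤ (10 * j + d) * 10 ^ K := Nat.le_mul_of_pos_left _ (by omega)
        omega
      · rw [if_neg (fun h => hc h.2)]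
        rw [Finset.card_eq_zero, Finset.eq_empty_iff_forall_notMem]
        intro m hm
        simp only [Finset.mem_inter, Finset.mem_Icc] at hm
        have hN1 : (10 * j + d) * 10 ^ K ≤ N := le_trans hm.1.1 hm.2.2
        have hN2 : N < (10 * j + d + 1) * 10 ^ K := by omega
        exact hdig (block_data p d N K j hp hd hj.1 (by omega) hN1 hN2).1
  rw [Finset.sum_congr rfl hinner, Finset.sum_add_distrib, Finset.sum_const,
    ← Finset.sum_filter, Finset.sum_const, ← hSdef]
  have hcard : (Finset.Icc (10 ^ (p - 2)) (10 ^ (p - 1) - 1)).card = 9 * 10 ^ (p - 2) := by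
    rw [Nat.card_Icc]
    omega
  rw [hcard]
  have hgeom := geom_ten K
  simp only [smul_eq_mul]
  have h1 : (10 : ℕ) ^ (p - 2) * (10 ^ K - 1) = 9 * 10 ^ (p - 2) * ∑ e ∈ Finset.range K, 10 ^ e := by
    have : (10 : ℕ) ^ K - 1 = 9 * ∑ e ∈ Finset.range K, 10 ^ e := by omega
    rw [this]; ring
  rw [h1]
  ring
end
end
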